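/- arXiv:2510.04675 — 13 statements merged into one kernel-verified Lean document; each statement's English description precedes it below -/
import Mathlib

section
/- Let q be a prime power and let d, e be positive integers such that (x^d)^e = x for every x ∈ F_q (i.e. x ↦ x^d is a permutation of F_q whose inverse permutation is x ↦ x^e). Then the monomials x^{d+1} and x^{e+1} are projectively equivalent: there exists a collineation of PG(2,q) mapping S_{x^{d+1}} onto S_{x^{e+1}}. -/
open scoped LinearAlgebra.Projectivization

/-- Collinearity of three points of `PG(2,q)`: their representing vectors span a
linear subspace of dimension at most `2`. -/
def Collin3 {F : Type*} [Field F] (p₁ p₂ p₃ : ℙ F (Fin 3 → F)) : Prop :=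
  Module.finrank F
    (Submodule.span F ({p₁.rep, p₂.rep, p₃.rep} : Set (Fin 3 → F))) ≤ 2

/-- A collineation of `PG(2,q)`: a bijection of the point set preserving collinearity
in both directions. -/
def IsCollineation {F : Type*} [Field F]
    (π : ℙ F (Fin 3 → F) ≃ ℙ F (Fin 3 → F)) : Prop :=
  ∀ p₁ p₂ p₃ : ℙ F (Fin 3 → F), Collin3 p₁ p₂ p₃ ↔ Collin3 (π p₁) (π p₂) (π p₃)

/-- The `(q+1)`-set `S_f = {[x : f(x) : 1] | x ∈ F} ∪ {[0 : 1 : 0]}` in `PG(2,q)`. -/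
def Sf {F : Type*} [Field F] (f : F → F) : Set (ℙ F (Fin 3 → F)) :=
  {p | (∃ x : F, p = Projectivization.mk F ![x, f x, 1] (by
          intro h
          have := congrFun h 2
          simp at this)) ∨
    p = Projectivization.mk F ![0, 1, 0] (by
          intro h
          have := congrFun h 1
          simp at this)}

namespace Stmt4Aux

variable {F : Type*} [Field F]

/-- The linear equivalence of `F^3` swapping the last two coordinates. -/
noncomputable def σL : (Fin 3 → F) ≃ₗ[F] (Fin 3 → F) :=
  LinearEquiv.funCongrLeft F F (Equiv.swap (1 : Fin 3) 2)

lemma σL_apply (v : Fin 3 → F) : σL v = ![v 0, v 2, v 1] := by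
  funext i
  fin_cases i <;>
    simp [σL, LinearEquiv.funCongrLeft, Equiv.swap_apply_def, LinearMap.funLeft_apply]

lemma σL_matrix (a b c : F) : σL ![a, b, c] = ![a, c, b] := by
  rw [σL_apply]; simp

lemma σL_invol (v : Fin 3 → F) : σL (σL (v : Fin 3 → F)) = v := by
  rw [σL_apply, σL_apply]
  funext i; fin_cases i <;> simp

lemma σL_inj : Function.Injective ((σL : (Fin 3 → F) ≃ₗ[F] _).toLinearMap) :=
  (σL : (Fin 3 → F) ≃ₗ[F] _).injective

lemma σL_ne_zero {v : Fin 3 → F} (hv : v ≠ 0) : σL v ≠ 0 :=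
  (σL.map_ne_zero_iff).mpr hv

/-- The collineation of `PG(2,F)` induced by `σL`. -/
noncomputable def π : ℙ F (Fin 3 → F) ≃ ℙ F (Fin 3 → F) where
  toFun := Projectivization.map σL.toLinearMap σL_inj
  invFun := Projectivization.map σL.toLinearMap σL_inj
  left_inv p := by
    conv_lhs => rw [← p.mk_rep]
    rw [Projectivization.map_mk, Projectivization.map_mk]
    conv_rhs => rw [← p.mk_rep]
    congr 1
    exact σL_invol _
  right_inv p := by
    conv_lhs => rw [← p.mk_rep]
    rw [Projectivization.map_mk, Projectivization.map_mk]
    conv_rhs => rw [← p.mk_rep]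
    congr 1
    exact σL_invol _

lemma π_mk (v : Fin 3 → F) (hv : v ≠ 0) :
    π (Projectivization.mk F v hv) = Projectivization.mk F (σL v) (σL_ne_zero hv) := by
  unfold π
  simp only [Equiv.coe_fn_mk]
  rw [Projectivization.map_mk]
  rfl

lemma π_π (p : ℙ F (Fin 3 → F)) : π (π p) = p := by
  conv_lhs => rw [← p.mk_rep]
  rw [π_mk, π_mk]
  conv_rhs => rw [← p.mk_rep]
  congr 1
  exact σL_invol _

lemma span_rep (p : ℙ F (Fin 3 → F)) :
    Submodule.span F {(π p).rep} = Submodule.span F {σL p.rep} := by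
  have h2 : π p = Projectivization.mk F (σL p.rep) (σL_ne_zero p.rep_nonzero) := by
    conv_lhs => rw [← p.mk_rep]
    exact π_mk _ _
  have h1 : Projectivization.mk F (π p).rep (π p).rep_nonzero
      = Projectivization.mk F (σL p.rep) (σL_ne_zero p.rep_nonzero) := by
    rw [(π p).mk_rep]; exact h2
  rw [Projectivization.mk_eq_mk_iff] at h1
  obtain ⟨a, ha⟩ := h1
  rw [← ha]
  exact Submodule.span_singleton_smul_eq a.isUnit _

lemma π_collin : IsCollineation (π (F := F)) := by
  intro p₁ p₂ p₃
  unfold Collin3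
  have key : Submodule.span F ({(π p₁).rep, (π p₂).rep, (π p₃).rep} : Set (Fin 3 → F)) =
      Submodule.map ((σL : (Fin 3 → F) ≃ₗ[F] _) : (Fin 3 → F) →ₗ[F] (Fin 3 → F))
        (Submodule.span F ({p₁.rep, p₂.rep, p₃.rep} : Set (Fin 3 → F))) := by
    rw [Submodule.map_span]
    have himg : (((σL : (Fin 3 → F) ≃ₗ[F] _) : (Fin 3 → F) →ₗ[F] (Fin 3 → F)) : (Fin 3 → F) → (Fin 3 → F)) ''
        {p₁.rep, p₂.rep, p₃.rep} = {σL p₁.rep, σL p₂.rep, σL p₃.rep} := by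
      simp [Set.image_insert_eq]
    rw [himg]
    rw [show ({(π p₁).rep, (π p₂).rep, (π p₃).rep} : Set (Fin 3 → F)) =
        insert (π p₁).rep (insert (π p₂).rep {(π p₃).rep}) from rfl,
      show ({σL p₁.rep, σL p₂.rep, σL p₃.rep} : Set (Fin 3 → F)) =
        insert (σL p₁.rep) (insert (σL p₂.rep) {σL p₃.rep}) from rfl]
    rw [Submodule.span_insert, Submodule.span_insert, Submodule.span_insert,
      Submodule.span_insert, span_rep, span_rep, span_rep]
  rw [key, LinearEquiv.finrank_map_eq (σL : (Fin 3 → F) ≃ₗ[F] _)]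

end Stmt4Aux

open Stmt4Aux in
theorem stmt4 {F : Type*} [Field F] [Fintype F] (d e : ℕ) (hd : 0 < d) (he : 0 < e)
    (h : ∀ x : F, (x ^ d) ^ e = x) :
    ∃ π : ℙ F (Fin 3 → F) ≃ ℙ F (Fin 3 → F), IsCollineation π ∧
      π '' Sf (fun x : F => x ^ (d + 1)) = Sf (fun x : F => x ^ (e + 1)) := by
  have hinj : Function.Injective (fun x : F => x ^ d) := by
    intro a b hab
    have := h a
    rw [show (a : F) ^ d = b ^ d from hab, h b] at this
    exact this.symm
  have hsurj : Function.Surjective (fun x : F => x ^ d) :=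
    Finite.surjective_of_injective hinj
  have h' : ∀ x : F, (x ^ e) ^ d = x := by
    intro x
    obtain ⟨y, hy⟩ := hsurj x
    simp only at hy
    rw [← hy, h y]
  have main : ∀ (d e : ℕ), 0 < d → 0 < e → (∀ x : F, (x ^ d) ^ e = x) →
      ∀ p ∈ Sf (fun x : F => x ^ (d + 1)), π p ∈ Sf (fun x : F => x ^ (e + 1)) := by
    clear hinj hsurj h h' hd he d e
    intro d e hd he h p hp
    rcases hp with ⟨x, hx⟩ | hx
    · subst hx
      rw [π_mk]
      by_cases hx0 : x = 0
      · subst hx0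
        right
        rw [Projectivization.mk_eq_mk_iff]
        refine ⟨1, ?_⟩
        simp only [σL_matrix]
        funext i; fin_cases i <;> simp
      · left
        refine ⟨(x⁻¹) ^ d, ?_⟩
        rw [Projectivization.mk_eq_mk_iff]
        have hxd : (x : F) ^ (d + 1) ≠ 0 := pow_ne_zero _ hx0
        refine ⟨Units.mk0 (x ^ (d+1)) hxd, ?_⟩
        have e2 : ((x : F) ^ d) ^ (e + 1) = x ^ (d + 1) := by
          rw [pow_succ, h, ← pow_succ']
        rw [σL_matrix]
        show (Units.mk0 (x ^ (d+1)) hxd) • ![x⁻¹ ^ d, (x⁻¹ ^ d) ^ (e + 1), 1]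
          = ![x, 1, x ^ (d + 1)]
        simp only [Units.smul_def, Units.val_mk0, Matrix.smul_cons, smul_eq_mul,
          Matrix.smul_empty, mul_one]
        funext i
        fin_cases i
        · show x ^ (d + 1) * x⁻¹ ^ d = x
          rw [inv_pow, pow_succ', mul_assoc, mul_inv_cancel₀ (pow_ne_zero _ hx0), mul_one]
        · show x ^ (d + 1) * (x⁻¹ ^ d) ^ (e + 1) = 1
          rw [inv_pow, inv_pow, e2, mul_inv_cancel₀ hxd]
        · rfl
    · subst hx
      rw [π_mk]
      left
      refine ⟨0, ?_⟩
      rw [Projectivization.mk_eq_mk_iff]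
      refine ⟨1, ?_⟩
      simp only [σL_matrix]
      funext i; fin_cases i <;> simp
  refine ⟨π, π_collin, ?_⟩
  apply Set.Subset.antisymm
  · rintro q ⟨p, hp, rfl⟩
    exact main d e hd he h p hp
  · intro q hq
    exact ⟨π q, main e d he hd h' q hq, π_π q⟩
end

section
/- Let q be a prime power and let d be an integer with 2 < d < q−1. For a, b ∈ F_q let N(a,b) denote the number of x ∈ F_q with x^d = a·x + b. Then N(a,b) ≤ min(d, q−d+1) for all a, b ∈ F_q. More precisely: (i) if a ≠ 0 and b = 0, then N(a,b) ≤ q−d+1; (ii) if a ≠ 0 and b ≠ 0, then N(a,b) ≤ q−d; (iii) if a = 0 and b ≠ 0, then N(a,b) ≤ q−d−1. -/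
open Polynomial Finset

lemma auxCount {F : Type*} [Field F] [Fintype F] [DecidableEq F]
    (p : Polynomial F) (hp : p ≠ 0) (P : F → Prop) [DecidablePred P]
    (h : ∀ x, P x → p.eval x = 0) :
    (Finset.univ.filter P).card ≤ p.natDegree := by
  refine le_trans (Finset.card_le_card (fun x hx => ?_))
    (le_trans (Multiset.toFinset_card_le p.roots) (Polynomial.card_roots' p))
  simp only [Finset.mem_filter, Finset.mem_univ, true_and] at hx
  simp [Polynomial.mem_roots, hp, h x hx]

theorem stmt5 {F : Type*} [Field F] [Fintype F] (d : ℕ)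
    (hd2 : 2 < d) (hdq : d < Fintype.card F - 1) :
    (∀ a b : F, Nat.card {x : F // x ^ d = a * x + b}
      ≤ min d (Fintype.card F - d + 1)) ∧
    (∀ a b : F, a ≠ 0 → b = 0 → Nat.card {x : F // x ^ d = a * x + b}
      ≤ Fintype.card F - d + 1) ∧
    (∀ a b : F, a ≠ 0 → b ≠ 0 → Nat.card {x : F // x ^ d = a * x + b}
      ≤ Fintype.card F - d) ∧
    (∀ a b : F, a = 0 → b ≠ 0 → Nat.card {x : F // x ^ d = a * x + b}
      ≤ Fintype.card F - d - 1) := by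
  classical
  set q := Fintype.card F with hqdef
  have hq1 : 1 ≤ q := Fintype.card_pos
  have hq : d + 2 ≤ q := by omega
  have hcard : ∀ a b : F, Nat.card {x : F // x ^ d = a * x + b}
      = (Finset.univ.filter fun x : F => x ^ d = a * x + b).card := by
    intro a b
    rw [Nat.card_eq_fintype_card, Fintype.card_subtype]
  -- key identity for nonzero solutions
  have keyid : ∀ a b x : F, x ≠ 0 → x ^ d = a * x + b →
      a * x ^ (q - d) + b * x ^ (q - 1 - d) - 1 = 0 := by
    intro a b x hx hxd
    have hpow : x ^ (q - 1) = 1 := FiniteField.pow_card_sub_one_eq_one x hx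
    have e1 : q - d = (q - 1 - d) + 1 := by omega
    have e2 : (q - 1 - d) + d = q - 1 := by omega
    have : a * x ^ (q - d) + b * x ^ (q - 1 - d) = 1 := by
      calc a * x ^ (q - d) + b * x ^ (q - 1 - d)
          = x ^ (q - 1 - d) * (a * x + b) := by rw [e1, pow_succ]; ring
        _ = x ^ (q - 1 - d) * x ^ d := by rw [← hxd]
        _ = x ^ (q - 1) := by rw [← pow_add, e2]
        _ = 1 := hpow
    rw [this]; ring
  -- bound by d
  have hled : ∀ a b : F,
      (Finset.univ.filter fun x : F => x ^ d = a * x + b).card ≤ d := by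
    intro a b
    set p : Polynomial F := X ^ d - C a * X - C b with hp
    have hpne : p ≠ 0 := by
      intro h
      have := congrArg (fun r => Polynomial.coeff r d) h
      simp [hp, Polynomial.coeff_X_pow, Polynomial.coeff_C, Polynomial.coeff_X,
        (by omega : d ≠ 0), (by omega : ¬(1 = d))] at this
      rw [if_neg (by omega : ¬(1 = d)), if_neg (by omega : ¬(d = 0))] at this
      simp at this
    have hdeg : p.natDegree ≤ d := by
      rw [hp]; compute_degree <;> omega
    refine le_trans (auxCount p hpne _ fun x hx => ?_) hdeg
    simp [hp, hx]
  -- bound for nonzero solutions, general a b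
  have keyA : ∀ a b : F,
      (Finset.univ.filter fun x : F => x ≠ 0 ∧ x ^ d = a * x + b).card ≤ q - d := by
    intro a b
    set p : Polynomial F := C a * X ^ (q - d) + C b * X ^ (q - 1 - d) - 1 with hp
    have hpne : p ≠ 0 := by
      intro h
      have := congrArg (fun r => Polynomial.eval 0 r) h
      simp [hp, zero_pow (by omega : q - d ≠ 0),
        zero_pow (by omega : q - 1 - d ≠ 0)] at this
    have hdeg : p.natDegree ≤ q - d := by
      rw [hp]; compute_degree <;> omega
    refine le_trans (auxCount p hpne _ fun x hx => ?_) hdeg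
    have := keyid a b x hx.1 hx.2
    simpa [hp] using this
  -- bound for nonzero solutions when a = 0
  have keyB : ∀ b : F,
      (Finset.univ.filter fun x : F => x ≠ 0 ∧ x ^ d = (0 : F) * x + b).card
        ≤ q - d - 1 := by
    intro b
    set p : Polynomial F := C b * X ^ (q - 1 - d) - 1 with hp
    have hpne : p ≠ 0 := by
      intro h
      have := congrArg (fun r => Polynomial.eval 0 r) h
      simp [hp, zero_pow (by omega : q - 1 - d ≠ 0)] at this
    have hdeg : p.natDegree ≤ q - d - 1 := by
      rw [hp]
      refine le_trans (Polynomial.natDegree_sub_le _ _) ?_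
      simp only [Polynomial.natDegree_one, max_le_iff]
      constructor
      · exact le_trans (Polynomial.natDegree_C_mul_le _ _)
          (by rw [Polynomial.natDegree_X_pow]; omega)
      · omega
    refine le_trans (auxCount p hpne _ fun x hx => ?_) hdeg
    have := keyid 0 b x hx.1 hx.2
    simp only [zero_mul, zero_add] at this ⊢
    simpa [hp] using this
  -- if b ≠ 0 then all solutions are nonzero
  have hsub0 : ∀ a b : F, b ≠ 0 →
      (Finset.univ.filter fun x : F => x ^ d = a * x + b)
        ⊆ Finset.univ.filter fun x : F => x ≠ 0 ∧ x ^ d = a * x + b := by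
    intro a b hb x hx
    simp only [Finset.mem_filter, Finset.mem_univ, true_and] at hx ⊢
    refine ⟨fun h0 => hb ?_, hx⟩
    subst h0
    simpa [zero_pow (by omega : d ≠ 0)] using hx.symm
  -- general: solutions ⊆ insert 0 (nonzero solutions)
  have hins : ∀ a b : F,
      (Finset.univ.filter fun x : F => x ^ d = a * x + b).card ≤ q - d + 1 := by
    intro a b
    have hsub : (Finset.univ.filter fun x : F => x ^ d = a * x + b)
        ⊆ insert 0 (Finset.univ.filter fun x : F => x ≠ 0 ∧ x ^ d = a * x + b) := by
      intro x hx
      simp only [Finset.mem_filter, Finset.mem_univ, true_and,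
        Finset.mem_insert] at hx ⊢
      by_cases h0 : x = 0
      · exact Or.inl h0
      · exact Or.inr ⟨h0, hx⟩
    calc _ ≤ _ := Finset.card_le_card hsub
      _ ≤ _ + 1 := Finset.card_insert_le _ _
      _ ≤ q - d + 1 := by have := keyA a b; omega
  refine ⟨fun a b => ?_, fun a b _ _ => ?_, fun a b _ hb => ?_, fun a b ha hb => ?_⟩
  · rw [hcard]; exact le_min (hled a b) (hins a b)
  · rw [hcard]; exact hins a b
  · rw [hcard]
    exact le_trans (Finset.card_le_card (hsub0 a b hb)) (keyA a b)
  · rw [hcard]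
    subst ha
    exact le_trans (Finset.card_le_card (hsub0 0 b hb)) (keyB b)
end

section
/- Let p be a prime, let s > 1, let q = p^s, and let i be a positive integer with i dividing s and i < s. Then for all a, b ∈ F_q, the number of x ∈ F_q satisfying x^{q − p^i} = a·x + b is at most p^i. -/
open Polynomial

theorem stmt6 (p s i : ℕ) (hp : p.Prime) (hs : 1 < s) (hi : 0 < i)
    (hdvd : i ∣ s) (hlt : i < s)
    {F : Type*} [Field F] [Fintype F] (hF : Fintype.card F = p ^ s) :
    ∀ a b : F, Nat.card {x : F // x ^ (p ^ s - p ^ i) = a * x + b} ≤ p ^ i := by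
  intro a b
  classical
  haveI : Fact p.Prime := ⟨hp⟩
  have hp1 : 1 < p := hp.one_lt
  -- characteristic of F is p
  haveI hcharr : CharP F (ringChar F) := ringChar.charP F
  obtain ⟨n, hrp, hcard⟩ := FiniteField.card F (ringChar F)
  have hr : ringChar F = p := by
    have h1 : ringChar F ∣ p ^ s := by
      rw [← hF, hcard]
      exact dvd_pow_self _ (by positivity)
    exact (Nat.prime_dvd_prime_iff_eq hrp hp).mp (hrp.dvd_of_dvd_pow h1)
  haveI hchar : CharP F p := hr ▸ hcharr
  have hfrob : Function.Injective (fun x : F => x ^ p ^ i) := by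
    intro x y hxy
    have h := sub_pow_char_pow (R := F) (p := p) (x := x) (y := y) (n := i)
    simp only at hxy
    rw [hxy, sub_self] at h
    exact sub_eq_zero.mp (pow_eq_zero_iff (n := p ^ i) (Nat.pow_pos hp.pos).ne' |>.mp h)
  have hle : p ^ i ≤ p ^ s := Nat.pow_le_pow_right hp1.le hlt.le
  have hltpow : p ^ i < p ^ s := Nat.pow_lt_pow_right hp1 hlt
  have hepos : 0 < p ^ s - p ^ i := Nat.sub_pos_of_lt hltpow
  -- key consequence for solutions
  have key : ∀ x : F, x ^ (p ^ s - p ^ i) = a * x + b → (a * x + b) * x ^ (p ^ i) = x := by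
    intro x hx
    calc (a * x + b) * x ^ (p ^ i) = x ^ (p ^ s - p ^ i) * x ^ (p ^ i) := by rw [hx]
    _ = x ^ (p ^ s) := by rw [← pow_add, Nat.sub_add_cancel hle]
    _ = x := by rw [← hF]; exact FiniteField.pow_card x
  by_cases hb : b = 0
  · -- at most two solutions: 0 and at most one nonzero
    subst hb
    have h2 : (2 : ℕ) ≤ p ^ i :=
      le_trans hp.two_le (Nat.le_self_pow hi.ne' p)
    refine le_trans ?_ h2
    have : Nat.card {x : F // x ^ (p ^ s - p ^ i) = a * x + 0} ≤ Nat.card (Fin 2) := by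
      apply Nat.card_le_card_of_injective
        (f := fun x => if x.1 = 0 then 0 else 1)
      rintro ⟨x, hx⟩ ⟨y, hy⟩ hxy
      simp only at hxy
      by_cases hx0 : x = 0 <;> by_cases hy0 : y = 0
      · exact Subtype.ext (hx0.trans hy0.symm)
      · simp [hx0, hy0] at hxy
      · simp [hx0, hy0] at hxy
      · -- both nonzero: show equal
        have kx := key x hx
        have ky := key y hy
        have hax : a * x ^ (p ^ i) = 1 := by
          have h' : x * (a * x ^ (p ^ i)) = x * 1 := by linear_combination kx
          exact mul_left_cancel₀ hx0 h'
        have hay : a * y ^ (p ^ i) = 1 := by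
          have h' : y * (a * y ^ (p ^ i)) = y * 1 := by linear_combination ky
          exact mul_left_cancel₀ hy0 h'
        have ha0 : a ≠ 0 := by
          intro h; rw [h, zero_mul] at hax; exact one_ne_zero hax.symm
        have : x ^ (p ^ i) = y ^ (p ^ i) :=
          mul_left_cancel₀ ha0 (hax.trans hay.symm)
        exact Subtype.ext (hfrob this)
    simpa using this
  · -- b ≠ 0 : inject into roots of X^(p^i) - (C b * X + C a)
    set h : F[X] := X ^ (p ^ i) - (C b * X + C a) with hh
    have hmon : h.Monic := by
      apply monic_X_pow_sub
      apply lt_of_le_of_lt (Polynomial.degree_linear_le)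
      exact_mod_cast Nat.one_lt_two.trans_le
        (le_trans le_rfl (by exact_mod_cast le_trans hp.two_le (Nat.le_self_pow hi.ne' p)))
    have hne : h ≠ 0 := hmon.ne_zero
    have hdeg : h.natDegree ≤ p ^ i := by
      refine le_trans (natDegree_sub_le _ _) ?_
      simp only [natDegree_X_pow, max_le_iff]
      refine ⟨le_rfl, ?_⟩
      refine le_trans (natDegree_add_le _ _) ?_
      simp only [max_le_iff]
      constructor
      · exact le_trans (natDegree_C_mul_le _ _) (by simp [Nat.one_le_iff_ne_zero, pow_ne_zero, hp.pos.ne'])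
      · simp
    -- injection
    have hinj : Nat.card {x : F // x ^ (p ^ s - p ^ i) = a * x + b}
        ≤ Nat.card {y : F // h.eval y = 0} := by
      apply Nat.card_le_card_of_injective (f := fun x => ⟨x.1⁻¹, by
        obtain ⟨x, hx⟩ := x
        have hx0 : x ≠ 0 := by
          intro h0
          rw [h0, zero_pow hepos.ne', mul_zero, zero_add] at hx
          exact hb hx.symm
        have kx := key x hx
        simp only [hh, eval_sub, eval_pow, eval_X, eval_add, eval_mul, eval_C]
        rw [inv_pow]
        have hxp : x ^ (p ^ i) ≠ 0 := pow_ne_zero _ hx0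
        field_simp
        linear_combination -kx⟩)
      rintro ⟨x, hx⟩ ⟨y, hy⟩ hxy
      simp only [Subtype.mk.injEq] at hxy
      exact Subtype.ext (inv_injective hxy)
    refine le_trans hinj ?_
    -- count roots
    classical
    rw [Nat.card_eq_fintype_card, Fintype.card_subtype]
    have hsub : Finset.univ.filter (fun y : F => h.eval y = 0) ⊆ h.roots.toFinset := by
      intro y hy
      simp only [Finset.mem_filter] at hy
      simp [Multiset.mem_toFinset, mem_roots, hne, IsRoot, hy.2]
    exact le_trans (Finset.card_le_card hsub)
      (le_trans (Multiset.toFinset_card_le _) (le_trans h.card_roots' hdeg))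
end

section
/- Let q be a prime power, let d ≥ 1 be an integer, and let m = gcd(d, q−1). If m(m−1) ≥ q−1, then the degree of the monomial x^d equals m; that is, for all a, b ∈ F_q the equation x^d = a·x + b has at most m solutions x ∈ F_q, and the equation x^d = 1 has exactly m solutions. -/
open Finset Polynomial

theorem stmt8 {F : Type*} [Field F] [Fintype F] (d : ℕ) (hd : 1 ≤ d)
    (m : ℕ) (hm : m = Nat.gcd d (Fintype.card F - 1))
    (hbig : Fintype.card F - 1 ≤ m * (m - 1)) :
    (∀ a b : F, Nat.card {x : F // x ^ d = a * x + b} ≤ m) ∧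
    Nat.card {x : F // x ^ d = 1} = m := by
  classical
  have hq2 : 2 ≤ Fintype.card F := Fintype.one_lt_card
  have hmd : m ∣ d := hm ▸ Nat.gcd_dvd_left _ _
  have hmq : m ∣ Fintype.card F - 1 := hm ▸ Nat.gcd_dvd_right _ _
  have hm0 : 0 < m := by
    rcases Nat.eq_zero_or_pos m with h | h
    · exfalso
      rw [hm] at h
      have := Nat.eq_zero_of_gcd_eq_zero_left h
      omega
    · exact h
  have hcardU : Fintype.card Fˣ = Fintype.card F - 1 := Fintype.card_units F
  -- a primitive m-th root of unity
  obtain ⟨g, hg⟩ := IsCyclic.exists_generator (α := Fˣ)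
  have hog : orderOf g = Fintype.card F - 1 := by
    rw [orderOf_eq_card_of_forall_mem_zpowers hg, Nat.card_eq_fintype_card, hcardU]
  obtain ⟨k, hk⟩ := hmq
  have hk0 : k ≠ 0 := by
    intro h; rw [h, Nat.mul_zero] at hk; omega
  have hou : orderOf (g ^ k) = m := by
    have hgcd : (m * k).gcd k = k := Nat.gcd_eq_right (dvd_mul_left k m)
    rw [orderOf_pow, hog, hk, hgcd, Nat.mul_div_cancel _ (Nat.pos_of_ne_zero hk0)]
  have hpfu : IsPrimitiveRoot (g ^ k) m := hou ▸ IsPrimitiveRoot.orderOf (g ^ k)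
  have hpf : IsPrimitiveRoot ((g ^ k : Fˣ) : F) m := IsPrimitiveRoot.coe_units_iff.mpr hpfu
  have cardT : (nthRootsFinset m (1 : F)).card = m := hpf.card_nthRootsFinset
  -- key equivalence
  have key : ∀ x : F, x ^ d = 1 ↔ x ^ m = 1 := by
    intro x
    constructor
    · intro hx
      have hx0 : x ≠ 0 := by
        intro h
        rw [h, zero_pow (by omega)] at hx
        exact one_ne_zero hx.symm
      set u : Fˣ := Units.mk0 x hx0 with hu
      have hud : u ^ d = 1 := by
        ext; push_cast [hu]; exact hx
      have h1 : orderOf u ∣ d := orderOf_dvd_of_pow_eq_one hud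
      have h2 : orderOf u ∣ Fintype.card F - 1 := hcardU ▸ orderOf_dvd_card
      have h3 : orderOf u ∣ m := hm ▸ Nat.dvd_gcd h1 h2
      have hum : u ^ m = 1 := orderOf_dvd_iff_pow_eq_one.mp h3
      have := congrArg (Units.val) hum
      push_cast [hu] at this
      exact this
    · intro hx
      obtain ⟨c, hc⟩ := hmd
      rw [hc, pow_mul, hx, one_pow]
  have memT : ∀ x : F, x ∈ nthRootsFinset m (1 : F) ↔ x ^ m = 1 := fun x =>
    Polynomial.mem_nthRootsFinset hm0 (1 : F)
  constructor
  · -- each line meets the graph in at most m points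
    intro a b
    have hcard : Nat.card {x : F // x ^ d = a * x + b}
        = (univ.filter (fun x : F => x ^ d = a * x + b)).card := by
      rw [Nat.card_eq_fintype_card, Fintype.card_subtype]
    rw [hcard]
    set S := univ.filter (fun x : F => x ^ d = a * x + b) with hS
    by_cases ha : a = 0
    · -- vertical-slope-free case: x^d = b
      subst ha
      by_cases hb : b = 0
      · subst hb
        have hsub : S ⊆ {0} := by
          intro x hx
          simp only [hS, mem_filter, mem_univ, true_and, zero_mul, zero_add] at hx
          have : x = 0 := pow_eq_zero_iff (by omega) |>.mp hx
          simp [this]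
        calc S.card ≤ ({0} : Finset F).card := Finset.card_le_card hsub
          _ = 1 := Finset.card_singleton _
          _ ≤ m := hm0
      · rcases S.eq_empty_or_nonempty with he | ⟨x0, hx0S⟩
        · rw [he]; simp [Nat.zero_le]
        · have hx0 : x0 ^ d = b := by
            simp only [hS, mem_filter, mem_univ, true_and, zero_mul, zero_add] at hx0S
            exact hx0S
          have hx00 : x0 ≠ 0 := by
            intro h
            rw [h, zero_pow (by omega)] at hx0
            exact hb hx0.symm
          have hinj : Set.InjOn (fun x : F => x * x0⁻¹) S := by
            intro x hx y hy hxy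
            have h0 : (x0 : F)⁻¹ ≠ 0 := inv_ne_zero hx00
            exact mul_right_cancel₀ h0 hxy
          have hmaps : ∀ x ∈ S, x * x0⁻¹ ∈ nthRootsFinset m (1 : F) := by
            intro x hx
            simp only [hS, mem_filter, mem_univ, true_and, zero_mul, zero_add] at hx
            rw [memT]
            rw [← key]
            rw [mul_pow, hx, inv_pow, hx0, mul_inv_cancel₀ hb]
          calc S.card ≤ (nthRootsFinset m (1 : F)).card :=
                Finset.card_le_card_of_injOn _ hmaps hinj
            _ = m := cardT
    · -- slanted lines
      set S' := univ.filter (fun x : F => x ≠ 0 ∧ x ^ d = a * x + b) with hS'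
      have hsub : S ⊆ insert 0 S' := by
        intro x hx
        simp only [hS, mem_filter, mem_univ, true_and] at hx
        by_cases hx0 : x = 0
        · simp [hx0]
        · apply Finset.mem_insert_of_mem
          simp only [hS', mem_filter, mem_univ, true_and]
          exact ⟨hx0, hx⟩
      have hcount : m * S'.card ≤ Fintype.card F - 1 := by
        have hinj : Set.InjOn (fun p : F × F => p.1 * p.2)
            (((nthRootsFinset m (1 : F)) ×ˢ S' : Finset (F × F)) : Set (F × F)) := by
          rintro ⟨ζ, x⟩ hzx ⟨ζ', x'⟩ hzx' hxy
          simp only [Finset.mem_coe, Finset.mem_product, memT, hS', mem_filter,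
            mem_univ, true_and] at hzx hzx'
          obtain ⟨hζ, hx0, hxd⟩ := hzx
          obtain ⟨hζ', hx0', hxd'⟩ := hzx'
          simp only at hxy
          have hζd : ζ ^ d = 1 := (key ζ).mpr hζ
          have hζd' : ζ' ^ d = 1 := (key ζ').mpr hζ'
          have hpow : x ^ d = x' ^ d := by
            have : (ζ * x) ^ d = (ζ' * x') ^ d := by rw [hxy]
            rwa [mul_pow, mul_pow, hζd, hζd', one_mul, one_mul] at this
          have hxx' : x = x' := by
            rw [hxd, hxd'] at hpow
            have : a * x = a * x' := by linear_combination hpow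
            exact mul_left_cancel₀ ha this
          subst hxx'
          have hζζ' : ζ = ζ' := mul_right_cancel₀ hx0 hxy
          simp [hζζ']
        have hmaps : ∀ p ∈ (nthRootsFinset m (1 : F)) ×ˢ S',
            p.1 * p.2 ∈ univ.erase (0 : F) := by
          rintro ⟨ζ, x⟩ hzx
          simp only [Finset.mem_product, memT, hS', mem_filter, mem_univ, true_and] at hzx
          obtain ⟨hζ, hx0, _⟩ := hzx
          have hζ0 : ζ ≠ 0 := by
            intro h
            rw [h, zero_pow (by omega)] at hζ
            exact one_ne_zero hζ.symm
          simp only [Finset.mem_erase, Finset.mem_univ, and_true]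
          exact mul_ne_zero hζ0 hx0
        have := Finset.card_le_card_of_injOn _ hmaps hinj
        rwa [Finset.card_product, cardT, Finset.card_erase_of_mem (Finset.mem_univ 0),
          Finset.card_univ] at this
      have hS'le : S'.card ≤ m - 1 := by
        have h1 : m * S'.card ≤ m * (m - 1) := le_trans hcount hbig
        exact Nat.le_of_mul_le_mul_left h1 hm0
      calc S.card ≤ (insert 0 S').card := Finset.card_le_card hsub
        _ ≤ S'.card + 1 := Finset.card_insert_le _ _
        _ ≤ (m - 1) + 1 := by omega
        _ = m := by omega
  · -- x^d = 1 has exactly m solutions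
    have hcard : Nat.card {x : F // x ^ d = 1}
        = (univ.filter (fun x : F => x ^ d = 1)).card := by
      rw [Nat.card_eq_fintype_card, Fintype.card_subtype]
    rw [hcard]
    have : univ.filter (fun x : F => x ^ d = 1) = nthRootsFinset m (1 : F) := by
      ext x
      simp only [mem_filter, mem_univ, true_and, memT]
      exact key x
    rw [this, cardT]
end

section
/- Let q be a prime power, let d ≥ 1 be an integer, and let m = gcd(d−1, q−1). If m(m+1) ≥ q−1, then the degree of the monomial x^d equals m+1; that is, for all a, b ∈ F_q the equation x^d = a·x + b has at most m+1 solutions x ∈ F_q, and the equation x^d = x has exactly m+1 solutions. -/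
open Subgroup Finset

lemma units_roots_card {F : Type*} [Field F] [Fintype F] (n : ℕ) :
    Nat.card {x : Fˣ // x ^ n = 1} = Nat.gcd n (Fintype.card F - 1) := by
  classical
  have hcard : Fintype.card Fˣ = Fintype.card F - 1 := Fintype.card_units (α := F)
  set N := Fintype.card Fˣ with hN
  have hN0 : 0 < N := Fintype.card_pos
  set g := Nat.gcd n N with hg
  have hg0 : 0 < g := Nat.gcd_pos_of_pos_right _ hN0
  have hgN : g ∣ N := Nat.gcd_dvd_right _ _
  have hset : ∀ x : Fˣ, x ^ n = 1 ↔ x ^ g = 1 := by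
    intro x
    constructor
    · intro h
      exact orderOf_dvd_iff_pow_eq_one.mp
        (Nat.dvd_gcd (orderOf_dvd_of_pow_eq_one h) (orderOf_dvd_card))
    · intro h
      exact orderOf_dvd_iff_pow_eq_one.mp
        ((orderOf_dvd_of_pow_eq_one h).trans (Nat.gcd_dvd_left _ _))
  have h1 : Nat.card {x : Fˣ // x ^ n = 1} = #{x : Fˣ | x ^ g = 1} := by
    rw [Nat.card_eq_fintype_card, Fintype.card_subtype]
    congr 1
    ext x
    simp [hset x]
  rw [h1, ← hcard]
  -- now show #{x : Fˣ | x ^ g = 1} = g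
  apply le_antisymm (IsCyclic.card_pow_eq_one_le hg0)
  obtain ⟨ζ, hζ⟩ := IsCyclic.exists_generator (α := Fˣ)
  have hord : orderOf ζ = N :=
    (orderOf_eq_card_of_forall_mem_zpowers hζ).trans Nat.card_eq_fintype_card
  set z := ζ ^ (N / g) with hz
  have hordz : orderOf z = g := by
    rw [hz, orderOf_pow, hord, Nat.gcd_eq_right (Nat.div_dvd_of_dvd hgN),
      Nat.div_div_self hgN hN0.ne']
  have hzg : z ^ g = 1 := hordz ▸ pow_orderOf_eq_one z
  calc g = #((zpowers z : Set Fˣ).toFinset) := by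
        simp only [Set.toFinset_card, SetLike.coe_sort_coe, Fintype.card_zpowers, hordz]
    _ ≤ _ := by
        apply Finset.card_le_card
        intro x hx
        simp only [Set.mem_toFinset, SetLike.mem_coe, mem_zpowers_iff] at hx
        obtain ⟨k, hk⟩ := hx
        simp only [Finset.mem_filter, Finset.mem_univ, true_and]
        rw [← hk, ← zpow_natCast (z ^ k) g, ← zpow_mul, mul_comm, zpow_mul, zpow_natCast,
          hzg, one_zpow]

lemma field_roots_card {F : Type*} [Field F] [Fintype F] (n : ℕ) :
    Nat.card {x : F // x ≠ 0 ∧ x ^ n = 1} = Nat.gcd n (Fintype.card F - 1) := by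
  rw [← units_roots_card (F := F) n]
  apply Nat.card_congr
  exact {
    toFun := fun x => ⟨Units.mk0 x.1 x.2.1, by
      ext
      simpa using x.2.2⟩
    invFun := fun u => ⟨(u.1 : F), Units.ne_zero _, by
      rw [← Units.val_pow_eq_pow_val, u.2, Units.val_one]⟩
    left_inv := fun x => Subtype.ext rfl
    right_inv := fun u => Subtype.ext (Units.ext rfl) }

theorem stmt9 {F : Type*} [Field F] [Fintype F] (d : ℕ) (hd : 1 ≤ d)
    (m : ℕ) (hm : m = Nat.gcd (d - 1) (Fintype.card F - 1))
    (hbig : Fintype.card F - 1 ≤ m * (m + 1)) :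
    (∀ a b : F, Nat.card {x : F // x ^ d = a * x + b} ≤ m + 1) ∧
    Nat.card {x : F // x ^ d = x} = m + 1 := by
  classical
  have hq : 1 < Fintype.card F := Fintype.one_lt_card
  have hq1 : 0 < Fintype.card F - 1 := by omega
  have hm0 : 0 < m := hm ▸ Nat.gcd_pos_of_pos_right _ hq1
  have hmdvd : m ∣ Fintype.card F - 1 := hm ▸ Nat.gcd_dvd_right _ _
  have hmd : m ∣ d - 1 := hm ▸ Nat.gcd_dvd_left _ _
  have hpow : ∀ x : F, x ^ d = x ^ (d - 1) * x := by
    intro x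
    nth_rewrite 1 [show d = (d - 1) + 1 by omega]
    rw [pow_succ]
  constructor
  · intro a b
    by_cases hd1 : d = 1
    · have hmq : m = Fintype.card F - 1 := by subst hd1; simpa using hm
      calc Nat.card {x : F // x ^ d = a * x + b} ≤ Nat.card F :=
            Nat.card_le_card_of_injective _ Subtype.val_injective
        _ = Fintype.card F := Nat.card_eq_fintype_card
        _ ≤ m + 1 := by omega
    · by_cases hb : b = 0
      · subst hb
        by_cases hex : ∃ x₀ : F, x₀ ≠ 0 ∧ x₀ ^ d = a * x₀ + 0
        · obtain ⟨x₀, hx0, hx0e⟩ := hex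
          have ha : x₀ ^ (d - 1) = a := by
            rw [add_zero] at hx0e
            exact mul_right_cancel₀ hx0 (by rw [← hpow x₀, hx0e])
          have ha0 : a ≠ 0 := ha ▸ pow_ne_zero _ hx0
          have key : ∀ x : F, x ≠ 0 → x ^ d = a * x + 0 → x ^ (d - 1) = a := by
            intro x hx hxe
            rw [add_zero] at hxe
            exact mul_right_cancel₀ hx (by rw [← hpow x, hxe])
          have hinj : Function.Injective
              (fun x : {x : F // x ^ d = a * x + 0} =>
                if hx : x.1 = 0 then (none : Option {u : F // u ≠ 0 ∧ u ^ (d - 1) = 1})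
                else some ⟨x.1 / x₀, div_ne_zero hx hx0, by
                  rw [div_pow, key x.1 hx x.2, ha, div_self ha0]⟩) := by
            intro x y hxy
            simp only at hxy
            by_cases hx : x.1 = 0 <;> by_cases hy : y.1 = 0 <;>
              simp only [hx, hy, dif_pos, dif_neg, not_false_iff] at hxy
            · exact Subtype.ext (hx.trans hy.symm)
            · exfalso; cases hxy
            · exfalso; cases hxy
            · apply Subtype.ext
              have h2 : x.1 / x₀ = y.1 / x₀ := congrArg Subtype.val (Option.some_injective _ hxy)
              field_simp at h2
              exact h2
          calc Nat.card {x : F // x ^ d = a * x + 0}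
              ≤ Nat.card (Option {u : F // u ≠ 0 ∧ u ^ (d - 1) = 1}) :=
                Nat.card_le_card_of_injective _ hinj
            _ = Nat.card {u : F // u ≠ 0 ∧ u ^ (d - 1) = 1} + 1 := Finite.card_option
            _ = m + 1 := by rw [field_roots_card, ← hm]
        · push_neg at hex
          have hsub : ∀ x : F, x ^ d = a * x + 0 → x = 0 := by
            intro x hx
            by_contra h0
            exact h0 (hex x h0 hx |>.elim)
          have hinj : Function.Injective
              (fun x : {x : F // x ^ d = a * x + 0} => (() : Unit)) := by
            intro x y _
            exact Subtype.ext ((hsub x.1 x.2).trans (hsub y.1 y.2).symm)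
          calc Nat.card {x : F // x ^ d = a * x + 0} ≤ Nat.card Unit :=
                Nat.card_le_card_of_injective _ hinj
            _ = 1 := Nat.card_unique
            _ ≤ m + 1 := by omega
      · -- b ≠ 0
        set K := (Fintype.card F - 1) / m with hK
        have hKm : m * K = Fintype.card F - 1 := Nat.mul_div_cancel' hmdvd
        have hKle : K ≤ m + 1 := by
          calc K ≤ m * (m + 1) / m := Nat.div_le_div_right hbig
            _ = m + 1 := Nat.mul_div_cancel_left _ hm0
        have hKdvd : K ∣ Fintype.card F - 1 := ⟨m, by rw [← hKm, mul_comm]⟩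
        have hne : ∀ x : F, x ^ d = a * x + b → x ≠ 0 := by
          intro x hx h0
          subst h0
          rw [zero_pow (by omega : d ≠ 0), mul_zero, zero_add] at hx
          exact hb hx.symm
        have hinj : Function.Injective
            (fun x : {x : F // x ^ d = a * x + b} =>
              (⟨x.1 ^ m, pow_ne_zero _ (hne x.1 x.2), by
                rw [← pow_mul, hKm]
                exact FiniteField.pow_card_sub_one_eq_one _ (hne x.1 x.2)⟩ :
                {z : F // z ≠ 0 ∧ z ^ K = 1})) := by
          intro x y hxy
          have hxm : x.1 ^ m = y.1 ^ m := congrArg Subtype.val hxy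
          have hx0 : x.1 ≠ 0 := hne x.1 x.2
          have hy0 : y.1 ≠ 0 := hne y.1 y.2
          set u := y.1 / x.1 with hu
          have hum : u ^ m = 1 := by
            rw [hu, div_pow, ← hxm, div_self (pow_ne_zero _ hx0)]
          obtain ⟨k, hk⟩ := hmd
          have hud : u ^ (d - 1) = 1 := by rw [hk, pow_mul, hum, one_pow]
          have hyx : y.1 = u * x.1 := by rw [hu, div_mul_cancel₀ _ hx0]
          have hcalc : y.1 ^ d = a * y.1 + u * b := by
            rw [hyx, mul_pow, hpow u, hud, one_mul, x.2, mul_add, ← mul_assoc, mul_comm u a,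
              mul_assoc]
          have hub : u * b = b := by
            have := y.2.symm.trans hcalc
            linear_combination -this
          have hu1 : u = 1 := by
            have := mul_right_cancel₀ hb (hub.trans (one_mul b).symm)
            exact this
          exact Subtype.ext (by rw [hyx, hu1, one_mul])
        calc Nat.card {x : F // x ^ d = a * x + b}
            ≤ Nat.card {z : F // z ≠ 0 ∧ z ^ K = 1} := Nat.card_le_card_of_injective _ hinj
          _ = Nat.gcd K (Fintype.card F - 1) := field_roots_card K
          _ = K := Nat.gcd_eq_left hKdvd
          _ ≤ m + 1 := hKle
  · have hiff : ∀ x : F, x ^ d = x ↔ x = 0 ∨ (x ≠ 0 ∧ x ^ (d - 1) = 1) := by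
      intro x
      rcases eq_or_ne x 0 with h0 | h0
      · subst h0; simp [zero_pow (show d ≠ 0 by omega)]
      · simp only [h0, false_or, true_and, hpow x]
        constructor
        · intro h; exact ⟨h0, mul_right_cancel₀ h0 (h.trans (one_mul x).symm)⟩
        · intro h; rw [h.2, one_mul]
    have hsetq : {x : F | x ^ d = x} = insert (0 : F) {x : F | x ≠ 0 ∧ x ^ (d - 1) = 1} := by
      ext x
      simp only [Set.mem_setOf_eq, Set.mem_insert_iff, hiff x]
    calc Nat.card {x : F // x ^ d = x} = ({x : F | x ^ d = x} : Set F).ncard :=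
          (Nat.card_coe_set_eq _).symm
      _ = ({x : F | x ≠ 0 ∧ x ^ (d - 1) = 1} : Set F).ncard + 1 := by
          rw [hsetq, Set.ncard_insert_of_notMem (by simp)]
      _ = m + 1 := by
          have h2 : ({x : F | x ≠ 0 ∧ x ^ (d - 1) = 1} : Set F).ncard = m := by
            rw [← Nat.card_coe_set_eq]
            exact (field_roots_card (d - 1)).trans hm.symm
          rw [h2]
end

section
/- Let q be a prime power. (i) If q ≥ 3, then the degree of the monomial x^{q−1} equals q−1. Now let e be a divisor of q−1 with e < q−1. (ii) If e ≥ 2, then the degree of x^e equals e. (iii) If e ≥ 1, then the degree of x^{e+1} equals e+1. (iv) If e ≥ 2, then the degree of x^{q−e} equals e+1. (In each case, 'the degree of x^n equals v' means: for all a, b ∈ F_q the equation x^n = a·x + b has at most v solutions x ∈ F_q, and some choice of (a,b) attains exactly v solutions.) -/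
/-- "The degree of the monomial `x^n` equals `v`": every line `y = a*x + b` meets the graph
of `x ↦ x^n` in at most `v` points, and some line meets it in exactly `v` points. -/
def MonomialDegreeIs (F : Type*) [Field F] (n v : ℕ) : Prop :=
  (∀ a b : F, Nat.card {x : F // x ^ n = a * x + b} ≤ v) ∧
  (∃ a b : F, Nat.card {x : F // x ^ n = a * x + b} = v)
open Polynomial

section Aux
variable {F : Type*} [Field F] [Fintype F]

lemma aux_card_le_of_roots (p : F[X]) (hp : p ≠ 0) {S : Set F}
    (h : ∀ x ∈ S, p.eval x = 0) : Nat.card S ≤ p.natDegree := by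
  classical
  have hsub : S ⊆ ↑p.roots.toFinset := fun x hx => by
    simp only [Finset.coe_sort_coe, Finset.mem_coe, Multiset.mem_toFinset, mem_roots']
    exact ⟨hp, h x hx⟩
  calc Nat.card S = S.ncard := rfl
    _ ≤ (↑p.roots.toFinset : Set F).ncard := Set.ncard_le_ncard hsub (Set.toFinite _)
    _ = p.roots.toFinset.card := Set.ncard_coe_finset _
    _ ≤ Multiset.card p.roots := Multiset.toFinset_card_le _
    _ ≤ p.natDegree := p.card_roots'

lemma aux_upper (n : ℕ) (hn : 2 ≤ n) (a b : F) :
    Nat.card {x : F // x ^ n = a * x + b} ≤ n := by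
  have hd1 : (C a * X + C b : F[X]).natDegree < (X ^ n : F[X]).natDegree := by
    rw [natDegree_X_pow]
    have : (C a * X + C b : F[X]).natDegree ≤ 1 := by compute_degree
    omega
  have h1 : (X ^ n - (C a * X + C b) : F[X]).natDegree = n := by
    rw [natDegree_sub_eq_left_of_natDegree_lt hd1, natDegree_X_pow]
  have h0 : (X ^ n - (C a * X + C b) : F[X]) ≠ 0 := by
    intro h; rw [h] at h1; simp at h1; omega
  have := aux_card_le_of_roots (X ^ n - (C a * X + C b)) h0
    (S := {x : F | x ^ n = a * x + b}) (fun x hx => by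
      simp only [Set.mem_setOf_eq] at hx
      simp [hx])
  rwa [h1] at this

lemma aux_card_pow_eq_one (m : ℕ) (h1 : 0 < m) (hm : m ∣ Fintype.card F - 1) :
    Nat.card {x : F // x ^ m = 1} = m := by
  classical
  obtain ⟨g, hg⟩ := IsCyclic.exists_generator (α := Fˣ)
  have horder : orderOf g = Fintype.card F - 1 := by
    rw [orderOf_eq_card_of_forall_mem_zpowers hg, Nat.card_eq_fintype_card, Fintype.card_units]
  have hq1 : Fintype.card F - 1 ≠ 0 := by
    have := Fintype.one_lt_card (α := F)
    omega
  have hkd : (Fintype.card F - 1) / m ∣ Fintype.card F - 1 := Nat.div_dvd_of_dvd hm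
  have hζ : orderOf (g ^ ((Fintype.card F - 1) / m)) = m := by
    rw [orderOf_pow, horder, Nat.gcd_eq_right hkd, Nat.div_div_self hm hq1]
  have hprim : IsPrimitiveRoot ((g ^ ((Fintype.card F - 1) / m) : Fˣ) : F) m := by
    rw [IsPrimitiveRoot.coe_units_iff]
    have h := IsPrimitiveRoot.orderOf (g ^ ((Fintype.card F - 1) / m))
    rwa [hζ] at h
  have hcard := hprim.card_nthRootsFinset
  rw [Nat.card_eq_fintype_card, Fintype.card_subtype]
  have hfe : (Finset.univ.filter fun x : F => x ^ m = 1) = nthRootsFinset m (1 : F) := by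
    ext x; simp [Polynomial.mem_nthRootsFinset h1]
  rw [hfe, hcard]

lemma aux_card_fix (m : ℕ) (h1 : 0 < m) :
    Nat.card {x : F // x ^ (m + 1) = x} = Nat.card {x : F // x ^ m = 1} + 1 := by
  have hset : {x : F | x ^ (m + 1) = x} = insert 0 {x : F | x ^ m = 1} := by
    ext x
    simp only [Set.mem_setOf_eq, Set.mem_insert_iff]
    constructor
    · intro h
      rcases eq_or_ne x 0 with hx | hx
      · exact Or.inl hx
      · right
        have h2 : x ^ m * x = 1 * x := by rw [pow_succ] at h; rw [h, one_mul]
        exact mul_right_cancel₀ hx h2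
    · rintro (rfl | h)
      · simp
      · rw [pow_succ, h, one_mul]
  have h0 : (0 : F) ∉ {x : F | x ^ m = 1} := by
    simp [Set.mem_setOf_eq, zero_pow h1.ne']
  calc Nat.card {x : F // x ^ (m + 1) = x}
      = ({x : F | x ^ (m + 1) = x}).ncard := rfl
    _ = (insert (0:F) {x : F | x ^ m = 1}).ncard := by rw [hset]
    _ = ({x : F | x ^ m = 1}).ncard + 1 := Set.ncard_insert_of_notMem h0 (Set.toFinite _)
    _ = Nat.card {x : F // x ^ m = 1} + 1 := rfl

lemma aux_set_eq (e : ℕ) (he : 0 < e) (helt : e < Fintype.card F - 1) (x : F) :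
    x ^ (Fintype.card F - 1 - e) = 1 ↔ x ^ e = 1 := by
  have hq : e + (Fintype.card F - 1 - e) = Fintype.card F - 1 := by omega
  constructor
  · intro h
    have hx : x ≠ 0 := by rintro rfl; rw [zero_pow (by omega)] at h; exact zero_ne_one h
    have h2 : x ^ e * x ^ (Fintype.card F - 1 - e) = 1 := by
      rw [← pow_add, hq]; exact FiniteField.pow_card_sub_one_eq_one x hx
    rwa [h, mul_one] at h2
  · intro h
    have hx : x ≠ 0 := by rintro rfl; rw [zero_pow (by omega)] at h; exact zero_ne_one h
    have h2 : x ^ e * x ^ (Fintype.card F - 1 - e) = 1 := by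
      rw [← pow_add, hq]; exact FiniteField.pow_card_sub_one_eq_one x hx
    rwa [h, one_mul] at h2

end Aux

section Aux2
variable {F : Type*} [Field F] [Fintype F]

lemma aux_upper_iv (e : ℕ) (he : 2 ≤ e) (helt : e < Fintype.card F - 1) (a b : F) :
    Nat.card {x : F // x ^ (Fintype.card F - e) = a * x + b} ≤ e + 1 := by
  classical
  set q := Fintype.card F with hq
  have hq2 : 2 ≤ q := Fintype.one_lt_card
  set p : F[X] := C a * X ^ e + C b * X ^ (e - 1) - 1 with hp
  have hpd : p.natDegree ≤ e := by
    rw [hp]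
    have h1 : (C a * X ^ e + C b * X ^ (e - 1) : F[X]).natDegree ≤ e := by
      compute_degree
    have h2 : (1 : F[X]).natDegree ≤ e := by simp
    exact le_trans (natDegree_sub_le _ _) (by omega)
  have hp0 : p ≠ 0 := by
    intro h
    have he0 : p.eval 0 = 0 := by rw [h]; simp
    rw [hp] at he0
    simp [zero_pow (by omega : e ≠ 0), zero_pow (by omega : e - 1 ≠ 0)] at he0
  have hsub : {x : F | x ^ (q - e) = a * x + b} ⊆ insert 0 {x : F | p.eval x = 0} := by
    intro x hx
    rcases eq_or_ne x 0 with rfl | hx0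
    · exact Set.mem_insert _ _
    · right
      simp only [Set.mem_setOf_eq] at hx ⊢
      rw [hp]
      simp only [eval_sub, eval_add, eval_mul, eval_pow, eval_C, eval_X, eval_one]
      have hxe : x ^ e = x * x ^ (e - 1) := by
        conv_lhs => rw [show e = (e - 1) + 1 by omega]
        rw [pow_succ']
      have h1 : x ^ (q - 1) = 1 := FiniteField.pow_card_sub_one_eq_one x hx0
      have h2 : (a * x + b) * x ^ (e - 1) = x ^ (q - e) * x ^ (e - 1) := by rw [hx]
      rw [← pow_add, show q - e + (e - 1) = q - 1 by omega, h1] at h2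
      have key : a * x ^ e + b * x ^ (e - 1) = 1 := by
        rw [hxe, ← h2]; ring
      rw [key, sub_self]
  have hroot := aux_card_le_of_roots p hp0 (S := {x : F | p.eval x = 0}) (fun x hx => hx)
  calc Nat.card {x : F // x ^ (q - e) = a * x + b}
      = ({x : F | x ^ (q - e) = a * x + b}).ncard := rfl
    _ ≤ (insert (0:F) {x : F | p.eval x = 0}).ncard := Set.ncard_le_ncard hsub (Set.toFinite _)
    _ ≤ ({x : F | p.eval x = 0}).ncard + 1 := Set.ncard_insert_le _ _
    _ ≤ e + 1 := by
        have : ({x : F | p.eval x = 0}).ncard ≤ p.natDegree := hroot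
        omega

end Aux2

theorem stmt11 (F : Type*) [Field F] [Fintype F] :
    (3 ≤ Fintype.card F →
      MonomialDegreeIs F (Fintype.card F - 1) (Fintype.card F - 1)) ∧
    (∀ e : ℕ, e ∣ Fintype.card F - 1 → e < Fintype.card F - 1 →
      (2 ≤ e → MonomialDegreeIs F e e) ∧
      (1 ≤ e → MonomialDegreeIs F (e + 1) (e + 1)) ∧
      (2 ≤ e → MonomialDegreeIs F (Fintype.card F - e) (e + 1))) := by
  have hq2 : 2 ≤ Fintype.card F := Fintype.one_lt_card
  constructor
  · intro hq3
    refine ⟨fun a b => aux_upper _ (by omega) a b, 0, 1, ?_⟩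
    rw [Nat.card_congr (Equiv.subtypeEquivRight fun x : F => by rw [zero_mul, zero_add])]
    exact aux_card_pow_eq_one _ (by omega) dvd_rfl
  · intro e hdvd hlt
    refine ⟨?_, ?_, ?_⟩
    · intro he2
      refine ⟨fun a b => aux_upper e he2 a b, 0, 1, ?_⟩
      rw [Nat.card_congr (Equiv.subtypeEquivRight fun x : F => by rw [zero_mul, zero_add])]
      exact aux_card_pow_eq_one e (by omega) hdvd
    · intro he1
      refine ⟨fun a b => aux_upper (e + 1) (by omega) a b, 1, 0, ?_⟩
      rw [Nat.card_congr (Equiv.subtypeEquivRight fun x : F => by rw [one_mul, add_zero])]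
      rw [aux_card_fix e (by omega), aux_card_pow_eq_one e (by omega) hdvd]
    · intro he2
      refine ⟨fun a b => aux_upper_iv e he2 hlt a b, 1, 0, ?_⟩
      rw [Nat.card_congr (Equiv.subtypeEquivRight fun x : F => by rw [one_mul, add_zero])]
      rw [show Fintype.card F - e = (Fintype.card F - 1 - e) + 1 by omega,
        aux_card_fix _ (by omega),
        Nat.card_congr (Equiv.subtypeEquivRight fun x : F => aux_set_eq e (by omega) hlt x),
        aux_card_pow_eq_one e (by omega) hdvd]
end

section
/- Let q = 2^s with s > 1 and let F_q be the finite field with q elements. Then the degree of the monomial x^{q−2} equals 2: for all a, b ∈ F_q the equation x^{q−2} = a·x + b has at most 2 solutions x ∈ F_q, and some choice of (a,b) gives exactly 2 solutions (for instance x^{q−2} = x has exactly the two solutions x = 0 and x = 1). -/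
theorem stmt12 (s : ℕ) (hs : 1 < s)
    {F : Type*} [Field F] [Fintype F] (hF : Fintype.card F = 2 ^ s) :
    (∀ a b : F, Nat.card {x : F // x ^ (Fintype.card F - 2) = a * x + b} ≤ 2) ∧
    (∃ a b : F, Nat.card {x : F // x ^ (Fintype.card F - 2) = a * x + b} = 2) ∧
    {x : F | x ^ (Fintype.card F - 2) = x} = {0, 1} := by
  classical
  set q := Fintype.card F with hq
  have hq4 : 4 ≤ q := by
    rw [hF]
    calc (4:ℕ) = 2 ^ 2 := rfl
    _ ≤ 2 ^ s := Nat.pow_le_pow_right (by norm_num) hs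
  have hr : ringChar F = 2 := by
    obtain ⟨n, hp, hcard⟩ := FiniteField.card F (ringChar F)
    have hdvd : ringChar F ∣ 2 ^ s := by
      rw [← hF, hq, hcard]
      exact dvd_pow_self _ n.pos.ne'
    exact (Nat.prime_dvd_prime_iff_eq hp Nat.prime_two).mp
      (hp.dvd_of_dvd_pow hdvd)
  haveI hchar : CharP F 2 := hr ▸ ringChar.charP F
  have h2 : (2 : F) = 0 := by exact_mod_cast CharP.cast_eq_zero F 2
  have hzero : (0:F) ^ (q-2) = 0 := zero_pow (by omega)
  have hpow : ∀ x : F, x ≠ 0 → x ^ (q-2) = x⁻¹ := by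
    intro x hx
    apply eq_inv_of_mul_eq_one_left
    have h1 : x ^ (q-1) = 1 := FiniteField.pow_card_sub_one_eq_one x hx
    rw [← pow_succ]
    rwa [show q - 2 + 1 = q - 1 by omega]
  have hsq : Function.Injective (fun x : F => x * x) := by
    intro x y h
    simp only at h
    have hz : (x + y) * (x + y) = 0 := by linear_combination h + (y*y + x*y) * h2
    have hxy : x + y = 0 := mul_self_eq_zero.mp hz
    have : x = -y := by linear_combination hxy
    rw [this, CharTwo.neg_eq]
  -- Part 3
  have hset : {x : F | x ^ (q-2) = x} = {0, 1} := by
    ext x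
    simp only [Set.mem_setOf_eq, Set.mem_insert_iff, Set.mem_singleton_iff]
    constructor
    · intro h
      by_cases hx : x = 0
      · exact Or.inl hx
      right
      rw [hpow x hx] at h
      have hx2 : x * x = 1 := by
        have := congrArg (· * x) h
        rw [inv_mul_cancel₀ hx] at this
        linear_combination -this
      have hz : (x + 1) * (x + 1) = 0 := by linear_combination hx2 + (x+1) * h2
      have : x = -1 := by linear_combination mul_self_eq_zero.mp hz
      rw [this, CharTwo.neg_eq]
    · rintro (rfl | rfl)
      · exact hzero
      · simp [hpow 1 one_ne_zero]
  -- helper for part 1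
  have key : ∀ a b x : F, x ^ (q-2) = a*x+b → (x = 0 ∧ b = 0) ∨ (a*x*x + b*x = 1) := by
    intro a b x h
    by_cases hx : x = 0
    · left
      refine ⟨hx, ?_⟩
      subst hx
      rw [hzero] at h
      linear_combination -h
    · right
      rw [hpow x hx] at h
      have := congrArg (· * x) h
      rw [inv_mul_cancel₀ hx] at this
      linear_combination -this
  refine ⟨?_, ?_, hset⟩
  · intro a b
    rw [Nat.card_eq_fintype_card, Fintype.card_subtype]
    by_cases hb : b = 0
    · subst hb
      by_cases ha : a = 0
      · subst ha
        have hsub : Finset.univ.filter (fun x : F => x ^ (q-2) = 0*x+0) ⊆ {0} := by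
          intro x hx
          simp only [Finset.mem_filter, zero_mul, add_zero] at hx
          simp only [Finset.mem_singleton]
          exact pow_eq_zero_iff (by omega) |>.mp hx.2
        calc _ ≤ ({0} : Finset F).card := Finset.card_le_card hsub
        _ ≤ 2 := by simp
      · obtain ⟨c, hc⟩ := (Finite.injective_iff_surjective.mp hsq) a⁻¹
        have hsub : Finset.univ.filter (fun x : F => x ^ (q-2) = a*x+0) ⊆ {0, c} := by
          intro x hx
          simp only [Finset.mem_filter] at hx
          rcases key a 0 x hx.2 with ⟨h0, _⟩ | hquad
          · simp [h0]
          · simp only [Finset.mem_insert, Finset.mem_singleton]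
            right
            apply hsq
            simp only [hc]
            field_simp
            linear_combination hquad
        calc _ ≤ ({0, c} : Finset F).card := Finset.card_le_card hsub
        _ ≤ 2 := Finset.card_insert_le _ _ |>.trans (by simp)
    · set p : Polynomial F := Polynomial.C a * Polynomial.X^2 + Polynomial.C b * Polynomial.X - 1 with hpdef
      have hp0 : p ≠ 0 := by
        intro h
        have := congrArg (Polynomial.eval 0) h
        simp [hpdef] at this
      have hsub : Finset.univ.filter (fun x : F => x ^ (q-2) = a*x+b) ⊆ p.roots.toFinset := by
        intro x hx
        simp only [Finset.mem_filter] at hx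
        rcases key a b x hx.2 with ⟨_, h0⟩ | hquad
        · exact absurd h0 hb
        · rw [Multiset.mem_toFinset, Polynomial.mem_roots hp0]
          simp only [Polynomial.IsRoot, hpdef, Polynomial.eval_sub, Polynomial.eval_add,
            Polynomial.eval_mul, Polynomial.eval_C, Polynomial.eval_pow, Polynomial.eval_X,
            Polynomial.eval_one]
          linear_combination hquad
      calc _ ≤ p.roots.toFinset.card := Finset.card_le_card hsub
      _ ≤ Multiset.card p.roots := Multiset.toFinset_card_le _
      _ ≤ p.natDegree := Polynomial.card_roots' p
      _ ≤ 2 := by rw [hpdef]; compute_degree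
  · refine ⟨1, 0, ?_⟩
    have hs2 : {x : F | x ^ (q-2) = 1*x+0} = ({0, 1} : Set F) := by
      rw [← hset]; ext x; simp
    have : Nat.card {x : F // x ^ (q-2) = 1*x+0} = ({0,1} : Set F).ncard := by
      rw [← Nat.card_coe_set_eq, ← hs2]
      rfl
    rw [this]
    exact Set.ncard_pair zero_ne_one
end

section
/- Let p be a prime, let q = p^2, and let F_q be the finite field with q elements. Then the degree of the monomial x^{q−p} equals p: for all a, b ∈ F_q the equation x^{q−p} = a·x + b has at most p solutions x ∈ F_q, and the equation x^{q−p} = −x − 1 has exactly p solutions x ∈ F_q. -/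
open Polynomial

theorem stmt14 (p : ℕ) (hp : p.Prime)
    {F : Type*} [Field F] [Fintype F] (hF : Fintype.card F = p ^ 2) :
    (∀ a b : F, Nat.card {x : F // x ^ (Fintype.card F - p) = a * x + b} ≤ p) ∧
    Nat.card {x : F // x ^ (Fintype.card F - p) = -x - 1} = p := by
  classical
  have hp2 : 2 ≤ p := hp.two_le
  haveI : Fact p.Prime := ⟨hp⟩
  -- characteristic p
  have hchar : ringChar F = p := by
    have h0 : ((Fintype.card F : F)) = 0 := FiniteField.cast_card_eq_zero F
    rw [hF] at h0
    push_cast at h0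
    have hpc : ((p : F)) = 0 := by
      rw [pow_two] at h0
      exact mul_self_eq_zero.mp h0
    have hdvd : ringChar F ∣ p := (ringChar.dvd hpc)
    have hrprime : (ringChar F).Prime := CharP.char_is_prime F (ringChar F)
    exact (Nat.prime_dvd_prime_iff_eq hrprime hp).mp hdvd
  haveI : CharP F p := hchar ▸ ringChar.charP F
  have hplt : p < p ^ 2 := by nlinarith
  have hsub1 : p ^ 2 - p + (p - 1) = p ^ 2 - 1 := by omega
  have hzero : (0 : F) ^ (p ^ 2 - p) = 0 := zero_pow (by omega)
  have key_pow : ∀ x : F, x ≠ 0 → x ^ (p ^ 2 - p) * x ^ (p - 1) = 1 := by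
    intro x hx
    rw [← pow_add, hsub1]
    have := FiniteField.pow_card_sub_one_eq_one x hx
    rwa [hF] at this
  have keyA : ∀ x : F, x ≠ 0 → ∀ c : F,
      (x ^ (p ^ 2 - p) = c ↔ c * x ^ (p - 1) = 1) := by
    intro x hx c
    constructor
    · rintro rfl; exact key_pow x hx
    · intro h
      have h2 := key_pow x hx
      have hxp : x ^ (p - 1) ≠ 0 := pow_ne_zero _ hx
      exact mul_right_cancel₀ hxp (h2.trans h.symm)
  have hxxp : ∀ x : F, x * x ^ (p - 1) = x ^ p := by
    intro x
    rw [← pow_succ']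
    congr 1
    omega
  constructor
  · -- part 1
    intro a b
    simp only [hF]
    have e : Nat.card {x : F // x ^ (p ^ 2 - p) = a * x + b}
        = Set.ncard {x : F | x ^ (p ^ 2 - p) = a * x + b} := Nat.card_coe_set_eq _
    rw [e]
    by_cases hb : b = 0
    · subst hb
      have hsub : {x : F | x ^ (p ^ 2 - p) = a * x + 0}
          ⊆ ({0} ∪ {x : F | a * x ^ p = 1} : Set F) := by
        intro x hx
        simp only [Set.mem_setOf_eq] at hx
        rcases eq_or_ne x 0 with rfl | hx0
        · exact Or.inl rfl
        · right
          have h1 := (keyA x hx0 _).mp hx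
          have : a * x ^ p = 1 := by
            rw [← hxxp x]
            linear_combination h1
          exact this
      refine le_trans (Set.ncard_le_ncard hsub (Set.toFinite _)) ?_
      refine le_trans (Set.ncard_union_le _ _) ?_
      have h1 : ({0} : Set F).ncard = 1 := Set.ncard_singleton 0
      have h2 : ({x : F | a * x ^ p = 1}).ncard ≤ 1 := by
        rw [Set.ncard_le_one_iff (Set.toFinite _)]
        intro u v hu hv
        have ha : a ≠ 0 := by
          rintro rfl
          simp at hu
        have huv : u ^ p = v ^ p := by
          have : a * u ^ p = a * v ^ p := hu.trans hv.symm
          exact mul_left_cancel₀ ha this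
        have := frobenius_inj F p
        have huv' : frobenius F p u = frobenius F p v := by
          simpa [frobenius_def] using huv
        exact this huv'
      omega
    · -- b ≠ 0
      set P : F[X] := C a * X ^ p + C b * X ^ (p - 1) - C 1 with hP
      have hPne : P ≠ 0 := by
        intro h
        have h0 : P.eval 0 = 0 := by rw [h]; simp
        rw [hP] at h0
        simp [zero_pow (by omega : p ≠ 0), zero_pow (by omega : p - 1 ≠ 0)] at h0
      have hdeg : P.natDegree ≤ p := by
        rw [hP]
        compute_degree
      have hsub : {x : F | x ^ (p ^ 2 - p) = a * x + b} ⊆ ↑P.roots.toFinset := by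
        intro x hx
        simp only [Set.mem_setOf_eq] at hx
        have hx0 : x ≠ 0 := by
          rintro rfl
          rw [hzero] at hx
          simp at hx
          exact hb hx.symm
        have h1 := (keyA x hx0 _).mp hx
        simp only [Finset.mem_coe, Multiset.mem_toFinset, mem_roots hPne]
        show P.eval x = 0
        rw [hP]
        simp only [eval_sub, eval_add, eval_mul, eval_pow, eval_C, eval_X, eval_one]
        have hxx := hxxp x
        linear_combination h1 - a * hxx
      calc ({x : F | x ^ (p ^ 2 - p) = a * x + b}).ncard
          ≤ (↑P.roots.toFinset : Set F).ncard := Set.ncard_le_ncard hsub (Set.toFinite _)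
        _ = P.roots.toFinset.card := Set.ncard_coe_finset _
        _ ≤ Multiset.card P.roots := Multiset.toFinset_card_le _
        _ ≤ P.natDegree := P.card_roots'
        _ ≤ p := hdeg
  · -- part 2
    simp only [hF]
    have e : Nat.card {x : F // x ^ (p ^ 2 - p) = -x - 1}
        = Set.ncard {x : F | x ^ (p ^ 2 - p) = -x - 1} := Nat.card_coe_set_eq _
    rw [e]
    -- primitive (p+1)-th root of unity
    obtain ⟨g, hg⟩ := IsCyclic.exists_ofOrder_eq_natCard (α := Fˣ)
    have hcardu : Nat.card Fˣ = p ^ 2 - 1 := by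
      rw [Nat.card_eq_fintype_card, Fintype.card_units, hF]
    have hmul : (p - 1) * (p + 1) = p ^ 2 - 1 := by
      zify [show 1 ≤ p from by omega, show 1 ≤ p ^ 2 from by nlinarith]
      ring
    have horder : orderOf (g ^ (p - 1)) = p + 1 := by
      rw [orderOf_pow, hg, hcardu]
      have hgcd : Nat.gcd (p ^ 2 - 1) (p - 1) = p - 1 := by
        rw [Nat.gcd_comm]
        exact Nat.gcd_eq_left ⟨p + 1, hmul.symm⟩
      rw [hgcd, ← hmul, Nat.mul_div_cancel_left _ (by omega : 0 < p - 1)]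
    have hprim : IsPrimitiveRoot (g ^ (p - 1)) (p + 1) :=
      horder ▸ IsPrimitiveRoot.orderOf _
    have hprimF : IsPrimitiveRoot ((g ^ (p - 1) : Fˣ) : F) (p + 1) :=
      IsPrimitiveRoot.coe_units_iff.mpr hprim
    have hcardroots : (nthRootsFinset (p + 1) (1 : F)).card = p + 1 :=
      hprimF.card_nthRootsFinset
    set t : Finset F := ((nthRootsFinset (p + 1) (1 : F)).image (fun y => y - 1)).erase 0 with ht
    have hinj : Function.Injective (fun y : F => y - 1) := by
      intro u v h
      simp only at h
      linear_combination h
    have hmemt : ∀ x : F, x ∈ t ↔ x ≠ 0 ∧ (x + 1) ^ (p + 1) = 1 := by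
      intro x
      rw [ht, Finset.mem_erase, Finset.mem_image]
      constructor
      · rintro ⟨hx0, y, hy, rfl⟩
        refine ⟨hx0, ?_⟩
        have := (mem_nthRootsFinset (by omega : 0 < p + 1) (1 : F)).mp hy
        simpa using this
      · rintro ⟨hx0, hx1⟩
        exact ⟨hx0, x + 1, (mem_nthRootsFinset (by omega : 0 < p + 1) (1 : F)).mpr hx1, by ring⟩
    have hpowid : ∀ x : F, (x + 1) ^ (p + 1) = x ^ (p + 1) + x ^ p + x + 1 := by
      intro x
      rw [pow_succ, add_pow_char x 1, one_pow]
      ring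
    have hset : {x : F | x ^ (p ^ 2 - p) = -x - 1} = ↑t := by
      ext x
      simp only [Set.mem_setOf_eq, Finset.mem_coe, hmemt]
      constructor
      · intro hx
        have hx0 : x ≠ 0 := by
          rintro rfl
          rw [hzero] at hx
          have : (1 : F) = 0 := by linear_combination hx
          exact one_ne_zero this
        refine ⟨hx0, ?_⟩
        have h1 := (keyA x hx0 _).mp hx
        have h3 : (-x - 1) * x ^ p = x := by
          calc (-x - 1) * x ^ p = (-x - 1) * x ^ (p - 1) * x := by
                rw [mul_assoc, mul_comm (x ^ (p-1)) x, hxxp x]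
            _ = 1 * x := by rw [h1]
            _ = x := one_mul x
        rw [hpowid x]
        linear_combination -h3
      · rintro ⟨hx0, hx1⟩
        rw [keyA x hx0]
        rw [hpowid x] at hx1
        have h3 : (-x - 1) * x ^ p = x := by linear_combination -hx1
        have : (-x - 1) * x ^ (p - 1) * x = 1 * x := by
          rw [mul_assoc, mul_comm (x ^ (p-1)) x, hxxp x, h3, one_mul]
        exact mul_right_cancel₀ hx0 this
    rw [hset, Set.ncard_coe_finset, ht]
    have h0mem : (0 : F) ∈ (nthRootsFinset (p + 1) (1 : F)).image (fun y => y - 1) :=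
      Finset.mem_image.mpr ⟨1, (mem_nthRootsFinset (by omega : 0 < p + 1) (1 : F)).mpr (one_pow _),
        sub_self 1⟩
    rw [Finset.card_erase_of_mem h0mem, Finset.card_image_of_injective _ hinj, hcardroots]
    omega
end

section
/- Let q be a prime power and let d ≥ 2 be an integer. Then for all a, b ∈ F_q, the number of x ∈ F_q with x^d = a·x + b is at most max(gcd(d, q−1), 1 + gcd(d−1, q−1), ⌊1/2 + √(q−1)⌋). In particular, if ⌊1/2 + √(q−1)⌋ ≤ max(gcd(d, q−1), 1 + gcd(d−1, q−1)), then the degree of x^d equals max(gcd(d, q−1), 1 + gcd(d−1, q−1)). -/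
open Polynomial


lemma aux_card_pow_one {F : Type*} [Field F] [Fintype F] (n : ℕ) (hn : n ≠ 0) :
    Nat.card {x : F // x ^ n = 1} = Nat.gcd n (Fintype.card F - 1) := by
  classical
  set q := Fintype.card F with hq
  have hq2 : 2 ≤ q := Fintype.one_lt_card
  have hq1 : 0 < q - 1 := by omega
  -- primitive (q-1)-th root
  obtain ⟨g, hg⟩ := IsCyclic.exists_generator (α := Fˣ)
  have hog : orderOf g = q - 1 := by
    rw [orderOf_eq_card_of_forall_mem_zpowers hg, Nat.card_eq_fintype_card, Fintype.card_units]
  have hprim : IsPrimitiveRoot (g : F) (q - 1) := by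
    rw [IsPrimitiveRoot.coe_units_iff, ← hog]
    exact IsPrimitiveRoot.orderOf g
  set g0 := Nat.gcd n (q - 1) with hg0
  have hg0pos : 0 < g0 := Nat.gcd_pos_of_pos_left _ (Nat.pos_of_ne_zero hn)
  have hg0dvd : g0 ∣ q - 1 := Nat.gcd_dvd_right _ _
  have hprod : q - 1 = (q - 1) / g0 * g0 := (Nat.div_mul_cancel hg0dvd).symm
  have hξ : IsPrimitiveRoot ((g : F) ^ ((q - 1) / g0)) g0 := hprim.pow hq1 hprod
  have hiff : ∀ x : F, x ^ n = 1 ↔ x ^ g0 = 1 := by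
    intro x
    constructor
    · intro hx
      have hx0 : x ≠ 0 := by
        intro h; rw [h, zero_pow hn] at hx; exact zero_ne_one hx
      have h1 : orderOf x ∣ n := orderOf_dvd_of_pow_eq_one hx
      have h2 : orderOf x ∣ q - 1 :=
        orderOf_dvd_of_pow_eq_one (FiniteField.pow_card_sub_one_eq_one x hx0)
      exact orderOf_dvd_iff_pow_eq_one.mp (Nat.dvd_gcd h1 h2)
    · intro hx
      obtain ⟨k, hk⟩ := Nat.gcd_dvd_left n (q - 1)
      rw [hk, pow_mul, hx, one_pow]
  have hequiv : {x : F // x ^ n = 1} ≃ {x : F // x ∈ (nthRoots g0 (1 : F)).toFinset} :=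
    Equiv.subtypeEquivRight (fun x => by
      rw [Multiset.mem_toFinset, mem_nthRoots hg0pos]; exact hiff x)
  rw [Nat.card_congr hequiv, Nat.card_eq_fintype_card, Fintype.card_coe,
    Multiset.toFinset_card_of_nodup (hξ.nthRoots_one_nodup), hξ.card_nthRoots_one]

lemma aux_card_pow_le {F : Type*} [Field F] [Fintype F] (n : ℕ) (hn : n ≠ 0) (c : F) :
    Nat.card {x : F // x ^ n = c} ≤ Nat.gcd n (Fintype.card F - 1) := by
  classical
  have hgpos : 0 < Nat.gcd n (Fintype.card F - 1) :=
    Nat.gcd_pos_of_pos_left _ (Nat.pos_of_ne_zero hn)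
  by_cases hc : c = 0
  · subst hc
    have : ∀ x : F, x ^ n = 0 ↔ x = 0 := fun x => pow_eq_zero_iff hn
    have he : {x : F // x ^ n = 0} ≃ {x : F // x = 0} :=
      Equiv.subtypeEquivRight (fun x => this x)
    rw [Nat.card_congr he, Nat.card_eq_fintype_card, Fintype.card_subtype_eq]
    exact hgpos
  · rcases isEmpty_or_nonempty {x : F // x ^ n = c} with he | ⟨⟨x₀, hx₀⟩⟩
    · simp [Nat.card_of_isEmpty]
    · have hx0 : x₀ ≠ 0 := by
        intro h; rw [h, zero_pow hn] at hx₀; exact hc hx₀.symm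
      have hinj : Function.Injective
          (fun x : {x : F // x ^ n = c} => (⟨x.1 * x₀⁻¹, by
            rw [mul_pow, inv_pow, x.2, hx₀, mul_inv_cancel₀ hc]⟩ :
            {x : F // x ^ n = 1})) := by
        intro x y hxy
        have := congrArg Subtype.val hxy
        simp only at this
        exact Subtype.ext (mul_right_cancel₀ (inv_ne_zero hx0) this)
      calc Nat.card {x : F // x ^ n = c} ≤ Nat.card {x : F // x ^ n = 1} :=
            Nat.card_le_card_of_injective _ hinj
        _ = _ := aux_card_pow_one n hn

lemma aux_pow_pred {F : Type*} [Field F] {d : ℕ} (hd : 2 ≤ d) {x a : F} (hx : x ≠ 0)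
    (h : x ^ d = a * x) : x ^ (d - 1) = a := by
  have hdd : d - 1 + 1 = d := by omega
  have : x ^ (d - 1) * x = a * x := by
    rw [← pow_succ, hdd, h]
  exact mul_right_cancel₀ hx this

lemma aux_linear_le {F : Type*} [Field F] [Fintype F] {d : ℕ} (hd : 2 ≤ d) (a : F) :
    Nat.card {x : F // x ^ d = a * x} ≤ 1 + Nat.gcd (d - 1) (Fintype.card F - 1) := by
  classical
  have hd1 : d - 1 ≠ 0 := by omega
  have hinj : Function.Injective (fun x : {x : F // x ^ d = a * x} =>
      if h : x.1 = 0 then (none : Option {y : F // y ^ (d - 1) = a})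
      else some ⟨x.1, aux_pow_pred hd h x.2⟩) := by
    intro x y hxy
    by_cases hx : x.1 = 0 <;> by_cases hy : y.1 = 0
    · exact Subtype.ext (hx.trans hy.symm)
    · simp [hx, hy] at hxy
    · simp [hx, hy] at hxy
    · simp [hx, hy] at hxy
      exact Subtype.ext hxy
  calc Nat.card {x : F // x ^ d = a * x}
      ≤ Nat.card (Option {y : F // y ^ (d - 1) = a}) :=
        Nat.card_le_card_of_injective _ hinj
    _ = Nat.card {y : F // y ^ (d - 1) = a} + 1 := by
        rw [Nat.card_eq_fintype_card, Fintype.card_option, Nat.card_eq_fintype_card]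
    _ ≤ 1 + Nat.gcd (d - 1) (Fintype.card F - 1) := by
        rw [add_comm]; exact Nat.add_le_add_left (aux_card_pow_le _ hd1 a) 1

lemma aux_linear_eq {F : Type*} [Field F] [Fintype F] {d : ℕ} (hd : 2 ≤ d) :
    Nat.card {x : F // x ^ d = x} = 1 + Nat.gcd (d - 1) (Fintype.card F - 1) := by
  classical
  have hd1 : d - 1 ≠ 0 := by omega
  have hd0 : d ≠ 0 := by omega
  have he : {x : F // x ^ d = x} ≃ Option {y : F // y ^ (d - 1) = 1} := by
    refine
      { toFun := fun x => if h : x.1 = 0 then none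
          else some ⟨x.1, aux_pow_pred hd h (by rw [x.2, one_mul])⟩
        invFun := fun o => o.elim ⟨0, by rw [zero_pow hd0]⟩
          (fun y => ⟨y.1, by
            have hdd : d - 1 + 1 = d := by omega
            calc (y.1 : F) ^ d = y.1 ^ (d - 1) * y.1 := by rw [← pow_succ, hdd]
              _ = y.1 := by rw [y.2, one_mul]⟩)
        left_inv := ?_
        right_inv := ?_ }
    · intro x
      by_cases hx : x.1 = 0
      · simp [hx]; exact Subtype.ext hx.symm
      · simp [hx]
    · intro o
      match o with
      | none => simp
      | some y =>
        have hy : y.1 ≠ 0 := by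
          intro h
          have := y.2
          rw [h, zero_pow hd1] at this
          exact zero_ne_one this
        simp [hy]
  rw [Nat.card_congr he, Nat.card_eq_fintype_card, Fintype.card_option,
    ← Nat.card_eq_fintype_card, aux_card_pow_one _ hd1, add_comm]

lemma aux_key {F : Type*} [Field F] {d : ℕ} (hd : 2 ≤ d) {a b x y : F} (ha : a ≠ 0)
    (hb : b ≠ 0) (hx : x ^ d = a * x + b) (hy : y ^ d = a * y + b) (hxy : x ≠ y) :
    y = b * (1 - (x / y) ^ d) / (a * ((x / y) ^ d - x / y)) := by
  have hd0 : d ≠ 0 := by omega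
  have hy0 : y ≠ 0 := by
    intro h; rw [h, zero_pow hd0, mul_zero, zero_add] at hy; exact hb hy.symm
  set t := x / y with htdef
  have hxt : x = t * y := (div_mul_cancel₀ x hy0).symm
  have ht1 : t ≠ 1 := by intro h; exact hxy (by rw [hxt, h, one_mul])
  have h1 : t ^ d * y ^ d = a * (t * y) + b := by rw [← mul_pow, ← hxt]; exact hx
  have h2 : y ^ d = a * y + b := hy
  have h3 : (t ^ d - t) * y ^ d = b * (1 - t) := by linear_combination h1 - t * h2
  have h4 : (t ^ d - 1) * y ^ d = a * y * (t - 1) := by linear_combination h1 - h2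
  have ht : t ^ d ≠ t := by
    intro h
    rw [h, sub_self, zero_mul] at h3
    rcases mul_eq_zero.mp h3.symm with h' | h'
    · exact hb h'
    · exact ht1 (sub_eq_zero.mp h').symm
  have hden : a * (t ^ d - t) ≠ 0 := mul_ne_zero ha (sub_ne_zero.mpr ht)
  rw [eq_div_iff hden]
  have h5 : (t - 1) * (y * (a * (t ^ d - t))) = (t - 1) * (b * (1 - t ^ d)) := by
    linear_combination (t ^ d - 1) * h3 + (t - t ^ d) * h4
  exact mul_left_cancel₀ (sub_ne_zero.mpr ht1) h5

lemma aux_generic {F : Type*} [Field F] [Fintype F] {d : ℕ} (hd : 2 ≤ d) {a b : F}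
    (ha : a ≠ 0) (hb : b ≠ 0) :
    Nat.card {x : F // x ^ d = a * x + b} ≤
      ⌊(1 / 2 : ℝ) + Real.sqrt ((Fintype.card F : ℝ) - 1)⌋₊ := by
  classical
  have hd0 : d ≠ 0 := by omega
  set q := Fintype.card F with hqdef
  have hq2 : 2 ≤ q := Fintype.one_lt_card
  set S := {x : F // x ^ d = a * x + b} with hSdef
  set N := Nat.card S with hNdef
  have hroot0 : ∀ x : F, x ^ d = a * x + b → x ≠ 0 := by
    intro x hx h
    rw [h, zero_pow hd0, mul_zero, zero_add] at hx
    exact hb hx.symm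
  -- injection from off-diagonal pairs into F \ {0, 1}
  have hinj : Function.Injective (fun p : {p : S × S // p.1 ≠ p.2} =>
      (⟨p.1.1.1 / p.1.2.1,
        div_ne_zero (hroot0 _ p.1.1.2) (hroot0 _ p.1.2.2),
        fun h => p.2 (Subtype.ext ((div_eq_one_iff_eq (hroot0 _ p.1.2.2)).mp h))⟩ :
        {t : F // t ≠ 0 ∧ t ≠ 1})) := by
    intro p₁ p₂ h
    have hv : p₁.1.1.1 / p₁.1.2.1 = p₂.1.1.1 / p₂.1.2.1 := congrArg Subtype.val h
    have hne₁ : (p₁.1.1.1 : F) ≠ p₁.1.2.1 := fun hv' => p₁.2 (Subtype.ext hv')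
    have hne₂ : (p₂.1.1.1 : F) ≠ p₂.1.2.1 := fun hv' => p₂.2 (Subtype.ext hv')
    have hy₁ := aux_key hd ha hb p₁.1.1.2 p₁.1.2.2 hne₁
    have hy₂ := aux_key hd ha hb p₂.1.1.2 p₂.1.2.2 hne₂
    have hyy : (p₁.1.2.1 : F) = p₂.1.2.1 := by rw [hy₁, hy₂, hv]
    have hxx : (p₁.1.1.1 : F) = p₂.1.1.1 := by
      have h1 := div_mul_cancel₀ (p₁.1.1.1 : F) (hroot0 _ p₁.1.2.2)
      have h2 := div_mul_cancel₀ (p₂.1.1.1 : F) (hroot0 _ p₂.1.2.2)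
      rw [← h1, ← h2, hv, hyy]
    exact Subtype.ext (Prod.ext (Subtype.ext hxx) (Subtype.ext hyy))
  have hcard1 : Nat.card {p : S × S // p.1 ≠ p.2} ≤ Nat.card {t : F // t ≠ 0 ∧ t ≠ 1} :=
    Nat.card_le_card_of_injective _ hinj
  -- card of target ≤ q - 2
  have hcardT : Nat.card {t : F // t ≠ 0 ∧ t ≠ 1} ≤ q - 2 := by
    rw [Nat.card_eq_fintype_card, Fintype.card_subtype]
    have hsub : Finset.univ.filter (fun t : F => t ≠ 0 ∧ t ≠ 1) ⊆
        Finset.univ \ {0, 1} := by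
      intro t ht
      simp only [Finset.mem_filter, Finset.mem_univ, true_and] at ht
      simp [ht.1, ht.2]
    calc (Finset.univ.filter (fun t : F => t ≠ 0 ∧ t ≠ 1)).card
        ≤ (Finset.univ \ ({0, 1} : Finset F)).card := Finset.card_le_card hsub
      _ = q - 2 := by
          rw [Finset.card_sdiff_of_subset (Finset.subset_univ _), Finset.card_pair zero_ne_one,
            Finset.card_univ]
  -- card of off-diagonal pairs = N * N - N
  have hdiag : Nat.card {p : S × S // p.1 = p.2} = N := by
    refine Nat.card_congr ⟨fun p => p.1.1, fun x => ⟨(x, x), rfl⟩, ?_, fun x => rfl⟩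
    intro p
    exact Subtype.ext (Prod.ext rfl p.2)
  have hoff : Nat.card {p : S × S // p.1 ≠ p.2} = N * N - N := by
    have h1 : Fintype.card {p : S × S // ¬ p.1 = p.2} =
        Fintype.card (S × S) - Fintype.card {p : S × S // p.1 = p.2} :=
      Fintype.card_subtype_compl _
    rw [Nat.card_eq_fintype_card, h1, Fintype.card_prod, ← Nat.card_eq_fintype_card, ← hNdef]
    rw [← Nat.card_eq_fintype_card, hdiag]
  have hNN : N * N - N ≤ q - 2 := by rw [← hoff]; exact le_trans hcard1 hcardT
  -- conclude via reals
  apply Nat.le_floor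
  rcases Nat.eq_zero_or_pos N with hN0 | hN1
  · rw [hN0]
    push_cast
    positivity
  · have hle : (N : ℝ) - 1 / 2 ≤ Real.sqrt ((q : ℝ) - 1) := by
      have hN1' : (1 : ℝ) ≤ (N : ℝ) := by exact_mod_cast hN1
      rw [Real.le_sqrt' (by linarith)]
      have hcast : ((N * N - N : ℕ) : ℝ) = (N : ℝ) * N - N := by
        have : N ≤ N * N := Nat.le_mul_of_pos_left N hN1
        push_cast [Nat.cast_sub this]
        ring
      have hcast2 : ((q - 2 : ℕ) : ℝ) = (q : ℝ) - 2 := by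
        push_cast [Nat.cast_sub hq2]
        ring
      have hr : (N : ℝ) * N - N ≤ (q : ℝ) - 2 := by
        rw [← hcast, ← hcast2]
        exact_mod_cast hNN
      nlinarith
    linarith


theorem stmt15 {F : Type*} [Field F] [Fintype F] (d : ℕ) (hd : 2 ≤ d) :
    (∀ a b : F, Nat.card {x : F // x ^ d = a * x + b} ≤
      max (max (Nat.gcd d (Fintype.card F - 1)) (1 + Nat.gcd (d - 1) (Fintype.card F - 1)))
        ⌊(1 / 2 : ℝ) + Real.sqrt ((Fintype.card F : ℝ) - 1)⌋₊) ∧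
    (⌊(1 / 2 : ℝ) + Real.sqrt ((Fintype.card F : ℝ) - 1)⌋₊ ≤
        max (Nat.gcd d (Fintype.card F - 1)) (1 + Nat.gcd (d - 1) (Fintype.card F - 1)) →
      (∀ a b : F, Nat.card {x : F // x ^ d = a * x + b} ≤
        max (Nat.gcd d (Fintype.card F - 1)) (1 + Nat.gcd (d - 1) (Fintype.card F - 1))) ∧
      (∃ a b : F, Nat.card {x : F // x ^ d = a * x + b} =
        max (Nat.gcd d (Fintype.card F - 1)) (1 + Nat.gcd (d - 1) (Fintype.card F - 1)))) := by
  have hd0 : d ≠ 0 := by omega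
  have part1 : ∀ a b : F, Nat.card {x : F // x ^ d = a * x + b} ≤
      max (max (Nat.gcd d (Fintype.card F - 1)) (1 + Nat.gcd (d - 1) (Fintype.card F - 1)))
        ⌊(1 / 2 : ℝ) + Real.sqrt ((Fintype.card F : ℝ) - 1)⌋₊ := by
    intro a b
    by_cases ha : a = 0
    · have he : {x : F // x ^ d = a * x + b} ≃ {x : F // x ^ d = b} :=
        Equiv.subtypeEquivRight (fun x => by rw [ha, zero_mul, zero_add])
      have h1 : Nat.card {x : F // x ^ d = a * x + b} ≤ Nat.gcd d (Fintype.card F - 1) := by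
        rw [Nat.card_congr he]; exact aux_card_pow_le d hd0 b
      exact le_trans h1 (le_trans (le_max_left _ _) (le_max_left _ _))
    · by_cases hb : b = 0
      · have he : {x : F // x ^ d = a * x + b} ≃ {x : F // x ^ d = a * x} :=
          Equiv.subtypeEquivRight (fun x => by rw [hb, add_zero])
        have h1 : Nat.card {x : F // x ^ d = a * x + b} ≤
            1 + Nat.gcd (d - 1) (Fintype.card F - 1) := by
          rw [Nat.card_congr he]; exact aux_linear_le hd a
        exact le_trans h1 (le_trans (le_max_right _ _) (le_max_left _ _))
      · exact le_trans (aux_generic hd ha hb) (le_max_right _ _)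
  refine ⟨part1, fun hS => ⟨fun a b => ?_, ?_⟩⟩
  · have := part1 a b
    rwa [max_eq_left hS] at this
  · rcases le_total (1 + Nat.gcd (d - 1) (Fintype.card F - 1))
        (Nat.gcd d (Fintype.card F - 1)) with h | h
    · refine ⟨0, 1, ?_⟩
      have he : {x : F // x ^ d = 0 * x + 1} ≃ {x : F // x ^ d = 1} :=
        Equiv.subtypeEquivRight (fun x => by rw [zero_mul, zero_add])
      rw [Nat.card_congr he, aux_card_pow_one d hd0, max_eq_left h]
    · refine ⟨1, 0, ?_⟩
      have he : {x : F // x ^ d = 1 * x + 0} ≃ {x : F // x ^ d = x} :=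
        Equiv.subtypeEquivRight (fun x => by rw [one_mul, add_zero])
      rw [Nat.card_congr he, aux_linear_eq hd, max_eq_right h]
end

section
/- Let q be an odd prime power and let f(x) = x^{(q−1)/2} on F_q. Let v_3(f) be the number of pairs (a,b) ∈ F_q × F_q such that the equation x^{(q−1)/2} = a·x + b has exactly 3 solutions x ∈ F_q. Then: (1) if q ≡ 1 (mod 4), then v_3(f) = 0; (2) if q ≡ 3 (mod 4) and q ≠ 7, then v_3(f) = (q−1)/2; and if q = 7, then v_3(f) = (q−1)/2 + 2 = 5. -/
open Finset

/-- `interDist f i` is the number of pairs `(a,b) ∈ F × F` such that the equation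
`f x = a * x + b` has exactly `i` solutions `x ∈ F`. -/
noncomputable def interDist {F : Type*} [Field F] (f : F → F) (i : ℕ) : ℕ :=
  Nat.card {ab : F × F // Nat.card {x : F // f x = ab.1 * x + ab.2} = i}

section Aux

variable {F : Type*} [Field F] [Fintype F]

private lemma auxChar2 (hodd : Odd (Fintype.card F)) : ringChar F ≠ 2 := by
  intro h
  have := FiniteField.even_card_of_char_two (F := F) h
  rw [Nat.odd_iff] at hodd
  omega

private lemma auxNeg1 (hodd : Odd (Fintype.card F)) : (-1 : F) ≠ 1 := by
  have h2 := Ring.two_ne_zero (auxChar2 hodd)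
  intro h; apply h2; linear_combination -h

private lemma auxKdiv (hodd : Odd (Fintype.card F)) :
    (Fintype.card F - 1) / 2 = Fintype.card F / 2 := by
  obtain ⟨m, hm⟩ := hodd; omega

private lemma auxKpos (hodd : Odd (Fintype.card F)) :
    (Fintype.card F - 1) / 2 ≠ 0 := by
  have := Fintype.one_lt_card (α := F)
  rw [Nat.odd_iff] at hodd
  omega

private lemma auxTri (hodd : Odd (Fintype.card F)) (x : F) :
    x ^ ((Fintype.card F - 1) / 2) = 0 ∨ x ^ ((Fintype.card F - 1) / 2) = 1 ∨
      x ^ ((Fintype.card F - 1) / 2) = -1 := by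
  rcases eq_or_ne x 0 with rfl | hx
  · exact Or.inl (zero_pow (auxKpos hodd))
  · rw [auxKdiv hodd]
    exact Or.inr (FiniteField.pow_dichotomy (auxChar2 hodd) hx)

private lemma auxNegOnePow (hodd : Odd (Fintype.card F)) :
    (-1 : F) ^ ((Fintype.card F - 1) / 2) = -1 ↔ Fintype.card F % 4 = 3 := by
  have h1 : IsSquare (-1 : F) ↔ Fintype.card F % 4 ≠ 3 := FiniteField.isSquare_neg_one_iff
  have h2 : IsSquare (-1 : F) ↔ (-1 : F) ^ (Fintype.card F / 2) = 1 :=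
    FiniteField.isSquare_iff (auxChar2 hodd) (neg_ne_zero.mpr one_ne_zero)
  have h3 := FiniteField.pow_dichotomy (auxChar2 hodd) (a := (-1 : F)) (neg_ne_zero.mpr one_ne_zero)
  rw [auxKdiv hodd]
  rcases h3 with h | h
  · rw [h]
    have hq : Fintype.card F % 4 ≠ 3 := h1.mp (h2.mpr h)
    simp only [hq, iff_false]
    exact fun hh => auxNeg1 hodd hh.symm
  · rw [h]
    simp only [true_iff]
    by_contra hc
    have : (-1 : F) ^ (Fintype.card F / 2) = 1 := h2.mp (h1.mpr hc)
    rw [h] at this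
    exact auxNeg1 hodd this

private lemma auxCard (hodd : Odd (Fintype.card F)) :
    Nat.card {x : F // x ^ ((Fintype.card F - 1) / 2) = 1} = (Fintype.card F - 1) / 2 ∧
    Nat.card {x : F // x ^ ((Fintype.card F - 1) / 2) = -1} = (Fintype.card F - 1) / 2 := by
  classical
  set k := (Fintype.card F - 1) / 2 with hk
  have hcard : ∀ c : F, Nat.card {x : F // x ^ k = c}
      = (univ.filter (fun x : F => x ^ k = c)).card := by
    intro c
    rw [Nat.card_eq_fintype_card, Fintype.card_subtype]
  obtain ⟨u, hu⟩ := FiniteField.exists_nonsquare (auxChar2 hodd)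
  have hu0 : u ≠ 0 := by rintro rfl; exact hu IsSquare.zero
  have huk : u ^ k = -1 := by
    rw [hk, auxKdiv hodd]
    rcases FiniteField.pow_dichotomy (auxChar2 hodd) hu0 with h | h
    · exact absurd ((FiniteField.isSquare_iff (auxChar2 hodd) hu0).mpr h) hu
    · exact h
  have hbij : (univ.filter (fun x : F => x ^ k = 1)).card
      = (univ.filter (fun x : F => x ^ k = -1)).card := by
    apply Finset.card_bij (fun x _ => u * x)
    · intro x hx
      simp only [mem_filter, mem_univ, true_and] at hx ⊢
      rw [mul_pow, huk, hx, mul_one]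
    · intro x _ y _ hxy
      exact mul_left_cancel₀ hu0 hxy
    · intro y hy
      simp only [mem_filter, mem_univ, true_and] at hy
      refine ⟨u⁻¹ * y, ?_, ?_⟩
      · simp only [mem_filter, mem_univ, true_and]
        rw [mul_pow, inv_pow, huk, hy]
        norm_num
      · rw [mul_inv_cancel_left₀ hu0]
  have h0 : univ.filter (fun x : F => x ^ k = 0) = {0} := by
    ext x
    simp [pow_eq_zero_iff (auxKpos hodd)]
    exact fun _ => auxKpos hodd
  have hunion : (univ : Finset F) = (univ.filter (fun x : F => x ^ k = 0)
      ∪ univ.filter (fun x : F => x ^ k = 1)) ∪ univ.filter (fun x : F => x ^ k = -1) := by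
    ext x
    simp only [mem_univ, mem_union, mem_filter, true_and, true_iff]
    have := auxTri hodd x
    rw [← hk] at this
    tauto
  have hd1 : Disjoint (univ.filter (fun x : F => x ^ k = 0))
      (univ.filter (fun x : F => x ^ k = 1)) := by
    simp only [Finset.disjoint_left, mem_filter, mem_univ, true_and]
    intro x h1 h2
    exact one_ne_zero (h2 ▸ h1 : (1 : F) = 0)
  have hd2 : Disjoint (univ.filter (fun x : F => x ^ k = 0)
      ∪ univ.filter (fun x : F => x ^ k = 1)) (univ.filter (fun x : F => x ^ k = -1)) := by
    rw [Finset.disjoint_union_left]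
    constructor <;>
      simp only [Finset.disjoint_left, mem_filter, mem_univ, true_and] <;> intro x h1 h2
    · exact neg_ne_zero.mpr one_ne_zero (h2 ▸ h1 : (-1 : F) = 0)
    · exact auxNeg1 hodd (h2 ▸ h1 : (-1 : F) = 1)
  have hcardF : Fintype.card F = 1 + (univ.filter (fun x : F => x ^ k = 1)).card
      + (univ.filter (fun x : F => x ^ k = -1)).card := by
    conv_lhs => rw [← Finset.card_univ, hunion]
    rw [Finset.card_union_of_disjoint hd2, Finset.card_union_of_disjoint hd1, h0,
      Finset.card_singleton]
  have hkF : 2 * k + 1 = Fintype.card F := by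
    rw [Nat.odd_iff] at hodd
    have := Fintype.one_lt_card (α := F)
    omega
  constructor <;> rw [hcard] <;> omega

private lemma auxChar3 (hodd : Odd (Fintype.card F)) (a b : F) :
    Nat.card {x : F // x ^ ((Fintype.card F - 1) / 2) = a * x + b} = 3 ↔
      ((a ≠ 0 ∧ b = 0 ∧ a ^ ((Fintype.card F - 1) / 2) = 1 ∧ Fintype.card F % 4 = 3) ∨
       (a = 0 ∧ (b = 1 ∨ b = -1) ∧ (Fintype.card F - 1) / 2 = 3)) := by
  classical
  have hcard : ∀ p : F → Prop, Nat.card {x : F // p x} = (univ.filter p).card := by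
    intro p
    rw [Nat.card_eq_fintype_card, Fintype.card_subtype]
  have hm1 : (-1 : F) ≠ 1 := auxNeg1 hodd
  rcases eq_or_ne a 0 with rfl | ha
  · simp only [ne_eq, not_true_eq_false, false_and, false_or, true_and, zero_mul, zero_add]
    rcases eq_or_ne b 1 with rfl | hb1
    · rw [show (fun x : F => x ^ ((Fintype.card F - 1) / 2) = 1)
        = fun x : F => x ^ ((Fintype.card F - 1) / 2) = 1 from rfl, (auxCard hodd).1]
      constructor
      · intro h; exact ⟨Or.inl rfl, h⟩
      · rintro ⟨-, h⟩; exact h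
    rcases eq_or_ne b (-1) with rfl | hbm1
    · rw [(auxCard hodd).2]
      constructor
      · intro h; exact ⟨Or.inr rfl, h⟩
      · rintro ⟨-, h⟩; exact h
    rcases eq_or_ne b 0 with rfl | hb0
    · have h00 : (univ.filter fun x : F => x ^ ((Fintype.card F - 1) / 2) = 0) = {0} := by
        ext x
        simp [pow_eq_zero_iff (auxKpos hodd)]
      rw [hcard, h00]
      simp only [Finset.card_singleton]
      constructor
      · intro h; omega
      · rintro ⟨h | h, -⟩
        · exact absurd h hb1
        · exact absurd h hbm1
    · have : (univ.filter fun x : F => x ^ ((Fintype.card F - 1) / 2) = b) = ∅ := by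
        ext x
        simp only [mem_filter, mem_univ, true_and, Finset.notMem_empty, iff_false]
        intro h
        rcases auxTri hodd x with h' | h' | h'
        · exact hb0 (h.symm.trans h')
        · exact hb1 (h.symm.trans h')
        · exact hbm1 (h.symm.trans h')
      rw [hcard, this]
      simp only [Finset.card_empty]
      constructor
      · intro h; omega
      · rintro ⟨h | h, -⟩
        · exact absurd h hb1
        · exact absurd h hbm1
  · -- a ≠ 0
    set k := (Fintype.card F - 1) / 2 with hk
    set s := univ.filter (fun x : F => x ^ k = a * x + b) with hs
    set T := ({0, 1, -1} : Finset F).image (fun c => (c - b) * a⁻¹) with hT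
    have hinj : Function.Injective (fun c : F => (c - b) * a⁻¹) := by
      intro c c' h
      simpa using mul_right_cancel₀ (inv_ne_zero ha) h
    have hTcard : T.card = 3 := by
      rw [hT, Finset.card_image_of_injective _ hinj]
      rw [Finset.card_insert_of_notMem (by
          simp only [Finset.mem_insert, Finset.mem_singleton]
          push_neg
          exact ⟨fun h => one_ne_zero h.symm, fun h => neg_ne_zero.mpr one_ne_zero h.symm⟩),
        Finset.card_insert_of_notMem (by
          simp only [Finset.mem_singleton]
          exact fun h => hm1 h.symm), Finset.card_singleton]
    have hsub : s ⊆ T := by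
      intro x hx
      rw [hs, mem_filter] at hx
      obtain ⟨-, hx⟩ := hx
      have htri := auxTri hodd x
      rw [← hk] at htri
      rw [hT, Finset.mem_image]
      have key : ∀ c : F, a * x + b = c → (c - b) * a⁻¹ = x := by
        intro c h
        rw [← h, add_sub_cancel_right, mul_comm a x, mul_inv_cancel_right₀ ha]
      rcases htri with h | h | h
      · exact ⟨0, by simp, key 0 (hx ▸ h)⟩
      · exact ⟨1, by simp, key 1 (hx ▸ h)⟩
      · exact ⟨-1, by simp, key (-1) (hx ▸ h)⟩
    have hmem : ∀ c : F, (c - b) * a⁻¹ ∈ s ↔ ((c - b) * a⁻¹) ^ k = c := by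
      intro c
      rw [hs, mem_filter]
      have : a * ((c - b) * a⁻¹) + b = c := by field_simp; ring
      rw [this]
      simp
    have main : s.card = 3 ↔ T ⊆ s := by
      constructor
      · intro h
        have : s = T := Finset.eq_of_subset_of_card_le hsub (by omega)
        rw [this]
      · intro h
        rw [Finset.Subset.antisymm hsub h, hTcard]
    rw [hcard, ← hs, main, hT, Finset.image_subset_iff]
    simp only [Finset.mem_insert, Finset.mem_singleton, forall_eq_or_imp, forall_eq]
    rw [hmem, hmem, hmem]
    constructor
    · rintro ⟨h0, h1, hm⟩
      have hb : b = 0 := by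
        have h00 : (0 - b) * a⁻¹ = 0 :=
          pow_eq_zero_iff (n := k) (by rw [hk]; exact auxKpos hodd) |>.mp h0
        rcases mul_eq_zero.mp h00 with h | h
        · linear_combination -h
        · exact absurd h (inv_ne_zero ha)
      subst hb
      have ha1 : a ^ k = 1 := by
        rw [show ((1 : F) - 0) * a⁻¹ = a⁻¹ by ring, inv_pow, inv_eq_one] at h1
        exact h1
      refine Or.inl ⟨ha, rfl, ha1, ?_⟩
      rw [show ((-1 : F) - 0) * a⁻¹ = -1 * a⁻¹ by ring, mul_pow, inv_pow, ha1, inv_one,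
        mul_one] at hm
      rw [← auxNegOnePow hodd, ← hk]
      exact hm
    · rintro (⟨-, rfl, ha1, hq⟩ | ⟨h, -, -⟩)
      · refine ⟨?_, ?_, ?_⟩
        · rw [show ((0 : F) - 0) * a⁻¹ = 0 by ring, zero_pow (by rw [hk]; exact auxKpos hodd)]
        · rw [show ((1 : F) - 0) * a⁻¹ = a⁻¹ by ring, inv_pow, ha1, inv_one]
        · rw [show ((-1 : F) - 0) * a⁻¹ = -1 * a⁻¹ by ring, mul_pow, inv_pow, ha1, inv_one,
            mul_one]
          rw [hk]
          exact (auxNegOnePow hodd).mpr hq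
      · exact absurd h ha

end Aux

theorem stmt16 {F : Type*} [Field F] [Fintype F] (hodd : Odd (Fintype.card F)) :
    (Fintype.card F % 4 = 1 →
      interDist (fun x : F => x ^ ((Fintype.card F - 1) / 2)) 3 = 0) ∧
    (Fintype.card F % 4 = 3 → Fintype.card F ≠ 7 →
      interDist (fun x : F => x ^ ((Fintype.card F - 1) / 2)) 3 = (Fintype.card F - 1) / 2) ∧
    (Fintype.card F = 7 →
      interDist (fun x : F => x ^ ((Fintype.card F - 1) / 2)) 3 = 5) := by
  classical
  have hm1 : (-1 : F) ≠ 1 := auxNeg1 hodd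
  have hk7 : (Fintype.card F - 1) / 2 = 3 ↔ Fintype.card F = 7 := by
    rw [Nat.odd_iff] at hodd; omega
  have hcard : interDist (fun x : F => x ^ ((Fintype.card F - 1) / 2)) 3
      = (univ.filter (fun ab : F × F =>
          Nat.card {x : F // x ^ ((Fintype.card F - 1) / 2) = ab.1 * x + ab.2} = 3)).card := by
    rw [interDist, Nat.card_eq_fintype_card, Fintype.card_subtype]
  have hsq : (univ.filter (fun a : F => a ^ ((Fintype.card F - 1) / 2) = 1)).card
      = (Fintype.card F - 1) / 2 := by
    have := (auxCard hodd).1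
    rwa [Nat.card_eq_fintype_card, Fintype.card_subtype] at this
  have hinj : Function.Injective (fun a : F => (a, (0 : F))) := by
    intro x y h
    exact congrArg Prod.fst h
  refine ⟨?_, ?_, ?_⟩
  · intro h1
    rw [hcard, Finset.card_eq_zero]
    ext ab
    simp only [mem_filter, mem_univ, true_and, Finset.notMem_empty, iff_false]
    rw [auxChar3 hodd ab.1 ab.2]
    rintro (⟨-, -, -, h⟩ | ⟨-, -, h⟩)
    · omega
    · have := hk7.mp h
      omega
  · intro h3 hne7
    rw [hcard]
    have himg : (univ.filter (fun ab : F × F =>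
          Nat.card {x : F // x ^ ((Fintype.card F - 1) / 2) = ab.1 * x + ab.2} = 3))
        = (univ.filter (fun a : F => a ^ ((Fintype.card F - 1) / 2) = 1)).image
            (fun a => (a, (0 : F))) := by
      ext ⟨a, b⟩
      simp only [mem_filter, mem_univ, true_and, Finset.mem_image, Prod.mk.injEq]
      rw [auxChar3 hodd a b]
      constructor
      · rintro (⟨ha, rfl, ha1, -⟩ | ⟨-, -, hk3⟩)
        · exact ⟨a, ha1, rfl, rfl⟩
        · exact absurd (hk7.mp hk3) hne7
      · rintro ⟨a', ha', rfl, rfl⟩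
        have ha0 : a' ≠ 0 := by
          rintro rfl
          rw [zero_pow (auxKpos hodd)] at ha'
          exact zero_ne_one ha'
        exact Or.inl ⟨ha0, rfl, ha', h3⟩
    rw [himg, Finset.card_image_of_injective _ hinj, hsq]
  · intro h7
    have h3 : Fintype.card F % 4 = 3 := by rw [h7]
    have hk3 : (Fintype.card F - 1) / 2 = 3 := by rw [h7]
    rw [hcard]
    have himg : (univ.filter (fun ab : F × F =>
          Nat.card {x : F // x ^ ((Fintype.card F - 1) / 2) = ab.1 * x + ab.2} = 3))
        = (univ.filter (fun a : F => a ^ ((Fintype.card F - 1) / 2) = 1)).image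
            (fun a => (a, (0 : F)))
          ∪ {((0 : F), (1 : F)), ((0 : F), (-1 : F))} := by
      ext ⟨a, b⟩
      simp only [mem_filter, mem_univ, true_and, Finset.mem_union, Finset.mem_image,
        Finset.mem_insert, Finset.mem_singleton, Prod.mk.injEq]
      rw [auxChar3 hodd a b]
      constructor
      · rintro (⟨ha, rfl, ha1, -⟩ | ⟨rfl, hb, -⟩)
        · exact Or.inl ⟨a, ha1, rfl, rfl⟩
        · rcases hb with rfl | rfl
          · exact Or.inr (Or.inl ⟨rfl, rfl⟩)
          · exact Or.inr (Or.inr ⟨rfl, rfl⟩)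
      · rintro (⟨a', ha', rfl, rfl⟩ | ⟨rfl, rfl⟩ | ⟨rfl, rfl⟩)
        · have ha0 : a' ≠ 0 := by
            rintro rfl
            rw [zero_pow (auxKpos hodd)] at ha'
            exact zero_ne_one ha'
          exact Or.inl ⟨ha0, rfl, ha', h3⟩
        · exact Or.inr ⟨rfl, Or.inl rfl, hk3⟩
        · exact Or.inr ⟨rfl, Or.inr rfl, hk3⟩
    have hdisj : Disjoint ((univ.filter (fun a : F => a ^ ((Fintype.card F - 1) / 2) = 1)).image
        (fun a => (a, (0 : F)))) ({((0 : F), (1 : F)), ((0 : F), (-1 : F))} : Finset (F × F)) := by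
      simp only [Finset.disjoint_left, Finset.mem_image, Finset.mem_insert,
        Finset.mem_singleton, mem_filter, mem_univ, true_and, Prod.mk.injEq]
      rintro ⟨a, b⟩ ⟨a', ha', heq⟩ hmem
      rw [← heq] at hmem
      simp only [Prod.mk.injEq] at hmem
      rcases hmem with ⟨-, h⟩ | ⟨-, h⟩
      · exact one_ne_zero h.symm
      · exact neg_ne_zero.mpr one_ne_zero h.symm
    rw [himg, Finset.card_union_of_disjoint hdisj, Finset.card_image_of_injective _ hinj, hsq,
      hk3, Finset.card_insert_of_notMem (by
        simp only [Finset.mem_singleton, Prod.mk.injEq]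
        rintro ⟨-, h⟩
        exact hm1 h.symm), Finset.card_singleton]
end

section
/- Let q = p^s with p prime, let a ∈ F_q, and consider the cubic f(x) = x^3 + a·x^2 over F_q. Let v_0(f) be the number of pairs (c,d) ∈ F_q × F_q such that the equation x^3 + a·x^2 = c·x + d has no solution x ∈ F_q. Then: (i) if p ≠ 3, then v_0(f) = (q^2 − 1)/3; (ii) if p = 3 and a ≠ 0, then v_0(f) = q^2/3; (iii) if p = 3 and a = 0, then v_0(f) = q(q−1)/3. -/
open Polynomial Finset

namespace S17

variable {F : Type*} [Field F]

noncomputable def cub (a c d : F) : F[X] := X^3 + C a * X^2 - C c * X - C d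

lemma eval_cub (a c d x : F) : (cub a c d).eval x = x^3 + a*x^2 - c*x - d := by
  simp [cub]

lemma expand (r t u : F) :
    (X - C r) * (X - C t) * (X - C u)
      = X^3 - C (r+t+u) * X^2 + C (r*t + r*u + t*u) * X - C (r*t*u) := by
  simp only [C_add, C_mul]; ring

lemma monic_cub (a c d : F) : (cub a c d).Monic := by
  unfold cub; monicity!

lemma natDegree_cub (a c d : F) : (cub a c d).natDegree = 3 := by
  unfold cub; compute_degree!

lemma coeff_aux {e1 e2 e3 a c d : F}
    (h : X^3 - C e1 * X^2 + C e2 * X - C e3 = cub a c d) :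
    e1 = -a ∧ e2 = -c ∧ e3 = d := by
  unfold cub at h
  refine ⟨?_, ?_, ?_⟩
  · have h2 := congrArg (fun p => coeff p 2) h
    simp [coeff_X_pow] at h2
    linear_combination -h2
  · have h1 := congrArg (fun p => coeff p 1) h
    simp [coeff_X_pow] at h1
    linear_combination h1
  · have h0 := congrArg (fun p => coeff p 0) h
    simp [coeff_X_pow] at h0
    exact h0

lemma factor_iff (a c d r t u : F) :
    (X - C r) * (X - C t) * (X - C u) = cub a c d ↔
      (r+t+u = -a ∧ r*t + r*u + t*u = -c ∧ r*t*u = d) := by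
  rw [expand]
  constructor
  · exact coeff_aux
  · rintro ⟨h1, h2, h3⟩
    rw [h1, h2, h3]
    unfold cub
    simp only [map_neg]
    ring

lemma split_two (a c d r t : F) (hrt : r ≠ t)
    (hr : (cub a c d).eval r = 0) (ht : (cub a c d).eval t = 0) :
    ∃ u, (X - C r) * (X - C t) * (X - C u) = cub a c d := by
  obtain ⟨Q, hQ⟩ := dvd_iff_isRoot.mpr hr
  have hcne : cub a c d ≠ 0 := (monic_cub a c d).ne_zero
  have hQ0 : Q ≠ 0 := by rintro rfl; rw [mul_zero] at hQ; exact hcne hQ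
  have hQt : Q.eval t = 0 := by
    have h := ht
    rw [hQ, eval_mul] at h
    rcases mul_eq_zero.mp h with h' | h'
    · exact absurd (by simpa [sub_eq_zero] using h' : t = r) hrt.symm
    · exact h'
  obtain ⟨L, hL⟩ := dvd_iff_isRoot.mpr hQt
  have hL0 : L ≠ 0 := by
    rintro rfl; rw [mul_zero] at hL; exact hQ0 hL
  have hdegQ : Q.natDegree = 2 := by
    have h3 := natDegree_cub a c d
    rw [hQ, natDegree_mul (X_sub_C_ne_zero r) hQ0, natDegree_X_sub_C] at h3
    omega
  have hdegL : L.natDegree = 1 := by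
    rw [hL, natDegree_mul (X_sub_C_ne_zero t) hL0, natDegree_X_sub_C] at hdegQ
    omega
  have hmQ : Q.Monic := by
    refine Monic.of_mul_monic_left (monic_X_sub_C r) ?_
    rw [← hQ]; exact monic_cub a c d
  have hmL : L.Monic := by
    refine Monic.of_mul_monic_left (monic_X_sub_C t) ?_
    rw [← hL]; exact hmQ
  have hLe : L = X - C (-(L.coeff 0)) := by
    rw [map_neg, sub_neg_eq_add]
    exact hmL.eq_X_add_C hdegL
  refine ⟨-(L.coeff 0), ?_⟩
  rw [hQ, hL, ← hLe, mul_assoc]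

lemma quad_eq {w2 w3 t u : F}
    (h : (X - C w2) * (X - C w3) = (X - C t) * (X - C u)) :
    (w2 = t ∧ w3 = u) ∨ (w2 = u ∧ w3 = t) := by
  have hroot : (w2 - t) * (w2 - u) = 0 := by
    have := congrArg (eval w2) h
    simpa using this.symm
  have hw3 : ∀ v : F, (X - C w3 : F[X]) = X - C v → w3 = v := by
    intro v hv
    have := congrArg (fun p => coeff p 0) hv
    simpa using this
  rcases mul_eq_zero.mp hroot with h' | h'
  · have e2 : w2 = t := sub_eq_zero.mp h'
    subst e2
    exact Or.inl ⟨rfl, hw3 u (mul_left_cancel₀ (X_sub_C_ne_zero w2) h)⟩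
  · have e2 : w2 = u := sub_eq_zero.mp h'
    subst e2
    have h2 : (X - C w2) * (X - C w3) = (X - C w2) * (X - C t) := by rw [h]; ring
    exact Or.inr ⟨rfl, hw3 t (mul_left_cancel₀ (X_sub_C_ne_zero w2) h2)⟩

lemma cubic_eq {w1 w2 w3 r t u : F}
    (h : (X - C w1) * (X - C w2) * (X - C w3) = (X - C r) * (X - C t) * (X - C u)) :
    (w1 = r ∧ ((w2 = t ∧ w3 = u) ∨ (w2 = u ∧ w3 = t))) ∨
    (w1 = t ∧ ((w2 = r ∧ w3 = u) ∨ (w2 = u ∧ w3 = r))) ∨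
    (w1 = u ∧ ((w2 = r ∧ w3 = t) ∨ (w2 = t ∧ w3 = r))) := by
  have hroot : (w1 - r) * ((w1 - t) * (w1 - u)) = 0 := by
    have := congrArg (eval w1) h
    simpa [mul_assoc] using this.symm
  rcases mul_eq_zero.mp hroot with h' | h'
  · have e : w1 = r := sub_eq_zero.mp h'
    subst e
    have h2 : (X - C w1) * ((X - C w2) * (X - C w3))
        = (X - C w1) * ((X - C t) * (X - C u)) := by linear_combination h
    exact Or.inl ⟨rfl, quad_eq (mul_left_cancel₀ (X_sub_C_ne_zero w1) h2)⟩
  rcases mul_eq_zero.mp h' with h'' | h''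
  · have e : w1 = t := sub_eq_zero.mp h''
    subst e
    have h2 : (X - C w1) * ((X - C w2) * (X - C w3))
        = (X - C w1) * ((X - C r) * (X - C u)) := by linear_combination h
    exact Or.inr (Or.inl ⟨rfl, quad_eq (mul_left_cancel₀ (X_sub_C_ne_zero w1) h2)⟩)
  · have e : w1 = u := sub_eq_zero.mp h''
    subst e
    have h2 : (X - C w1) * ((X - C w2) * (X - C w3))
        = (X - C w1) * ((X - C r) * (X - C t)) := by linear_combination h
    exact Or.inr (Or.inr ⟨rfl, quad_eq (mul_left_cancel₀ (X_sub_C_ne_zero w1) h2)⟩)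

section Counting
variable [Fintype F] [DecidableEq F]

def Rset (a c d : F) : Finset F := univ.filter (fun x => x^3 + a*x^2 = c*x + d)

lemma mem_Rset {a c d x : F} : x ∈ Rset a c d ↔ (cub a c d).eval x = 0 := by
  simp only [Rset, mem_filter, mem_univ, true_and, eval_cub]
  constructor <;> intro h <;> linear_combination h

def σm (w : F × F × F) : F × F :=
  (-(w.1*w.2.1 + w.1*w.2.2 + w.2.1*w.2.2), w.1*w.2.1*w.2.2)

def Uset (a : F) : Finset (F × F × F) :=
  univ.filter (fun w => w.1 + w.2.1 + w.2.2 = -a ∧ ¬(w.1 = w.2.1 ∧ w.2.1 = w.2.2))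

def Fib (a c d : F) : Finset (F × F × F) := (Uset a).filter (fun w => σm w = (c, d))

lemma mem_Fib {a c d : F} {w : F × F × F} :
    w ∈ Fib a c d ↔
      ((X - C w.1) * (X - C w.2.1) * (X - C w.2.2) = cub a c d
        ∧ ¬(w.1 = w.2.1 ∧ w.2.1 = w.2.2)) := by
  rw [factor_iff]
  simp only [Fib, Uset, σm, mem_filter, mem_univ, true_and, Prod.ext_iff]
  constructor
  · rintro ⟨⟨h1, h2⟩, h3, h4⟩
    exact ⟨⟨h1, by linear_combination -h3, h4⟩, h2⟩
  · rintro ⟨⟨h1, h3, h4⟩, h2⟩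
    exact ⟨⟨h1, h2⟩, by linear_combination -h3, h4⟩

lemma mem_Rset_of_fac {a c d r t u x : F}
    (h : (X - C r) * (X - C t) * (X - C u) = cub a c d) :
    x ∈ Rset a c d ↔ (x = r ∨ x = t ∨ x = u) := by
  rw [mem_Rset, ← h]
  simp [sub_eq_zero, mul_eq_zero]
  tauto

lemma mem_Fib' {a c d : F} {w1 w2 w3 : F} :
    (w1, w2, w3) ∈ Fib a c d ↔
      ((X - C w1) * (X - C w2) * (X - C w3) = cub a c d ∧ ¬(w1 = w2 ∧ w2 = w3)) :=
  mem_Fib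

set_option maxHeartbeats 2000000 in
lemma key (a c d : F) :
    (Fib a c d).card + 3
      = (if ∀ x : F, x^3 + a*x^2 ≠ c*x + d then 3 else 0) + 3 * (Rset a c d).card := by
  by_cases h0 : ∀ x : F, x^3 + a*x^2 ≠ c*x + d
  · rw [if_pos h0]
    have hR : Rset a c d = ∅ := by
      rw [eq_empty_iff_forall_notMem]
      intro x hx
      simp only [Rset, mem_filter] at hx
      exact h0 x hx.2
    have hF : Fib a c d = ∅ := by
      rw [eq_empty_iff_forall_notMem]
      intro w hw
      rw [mem_Fib] at hw
      have : w.1 ∈ Rset a c d := (mem_Rset_of_fac hw.1).mpr (Or.inl rfl)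
      rw [hR] at this
      exact absurd this (notMem_empty _)
    rw [hR, hF]; simp
  · rw [if_neg h0]
    push_neg at h0
    obtain ⟨r, hr⟩ := h0
    have hrR : r ∈ Rset a c d := by simp [Rset, hr]
    by_cases h1 : ∀ x ∈ Rset a c d, x = r
    · have hR : Rset a c d = {r} := by
        ext x
        simp only [mem_singleton]
        exact ⟨fun hx => h1 x hx, fun hx => hx ▸ hrR⟩
      have hF : Fib a c d = ∅ := by
        rw [eq_empty_iff_forall_notMem]
        intro w hw
        rw [mem_Fib] at hw
        obtain ⟨hp, hnc⟩ := hw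
        have e1 := h1 _ ((mem_Rset_of_fac hp).mpr (Or.inl rfl))
        have e2 := h1 _ ((mem_Rset_of_fac hp).mpr (Or.inr (Or.inl rfl)))
        have e3 := h1 _ ((mem_Rset_of_fac hp).mpr (Or.inr (Or.inr rfl)))
        exact hnc ⟨e1.trans e2.symm, e2.trans e3.symm⟩
      rw [hR, hF]; simp
    · push_neg at h1
      obtain ⟨t, htR, htr⟩ := h1
      have hrt : r ≠ t := fun h => htr (h.symm)
      obtain ⟨u, hsplit⟩ :=
        split_two a c d r t hrt (mem_Rset.mp hrR) (mem_Rset.mp htR)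
      rcases eq_or_ne u r with rfl | hur
      · -- here r has been replaced by u; roots multiset {u, t, u}, hrt : u ≠ t
        have hR : Rset a c d = {u, t} := by
          ext x
          rw [mem_Rset_of_fac hsplit]
          simp only [mem_insert, mem_singleton]
          tauto
        have hF : Fib a c d = {(u,u,t), (u,t,u), (t,u,u)} := by
          ext ⟨w1, w2, w3⟩
          rw [mem_Fib']
          simp only [mem_insert, mem_singleton, Prod.mk.injEq]
          constructor
          · rintro ⟨hp, hnc⟩
            have hd := cubic_eq (hp.trans hsplit.symm)
            tauto
          · intro hw
            refine ⟨?_, ?_⟩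
            · rcases hw with ⟨e1,e2,e3⟩ | ⟨e1,e2,e3⟩ | ⟨e1,e2,e3⟩ <;>
                subst e1 <;> subst e2 <;> subst e3 <;> linear_combination hsplit
            · rcases hw with ⟨e1,e2,e3⟩ | ⟨e1,e2,e3⟩ | ⟨e1,e2,e3⟩ <;>
                subst e1 <;> subst e2 <;> subst e3 <;>
                rintro ⟨ha, hb⟩ <;> exact hrt (by tauto)
        rw [hR, hF]
        rw [card_insert_of_notMem (by simp [Prod.ext_iff, hrt]),
          card_insert_of_notMem (by simp [Prod.ext_iff, hrt]),
          card_singleton, card_pair hrt]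
      · rcases eq_or_ne u t with rfl | hut
        · -- t replaced by u; roots multiset {r, u, u}, hrt : r ≠ u
          have hR : Rset a c d = {r, u} := by
            ext x
            rw [mem_Rset_of_fac hsplit]
            simp only [mem_insert, mem_singleton]
            tauto
          have hF : Fib a c d = {(r,u,u), (u,r,u), (u,u,r)} := by
            ext ⟨w1, w2, w3⟩
            rw [mem_Fib']
            simp only [mem_insert, mem_singleton, Prod.mk.injEq]
            constructor
            · rintro ⟨hp, hnc⟩
              have hd := cubic_eq (hp.trans hsplit.symm)
              tauto
            · intro hw
              refine ⟨?_, ?_⟩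
              · rcases hw with ⟨e1,e2,e3⟩ | ⟨e1,e2,e3⟩ | ⟨e1,e2,e3⟩ <;>
                  subst e1 <;> subst e2 <;> subst e3 <;> linear_combination hsplit
              · rcases hw with ⟨e1,e2,e3⟩ | ⟨e1,e2,e3⟩ | ⟨e1,e2,e3⟩ <;>
                  subst e1 <;> subst e2 <;> subst e3 <;>
                  rintro ⟨ha, hb⟩ <;> exact hrt (by tauto)
          rw [hR, hF]
          rw [card_insert_of_notMem (by simp [Prod.ext_iff, hrt]),
            card_insert_of_notMem (by simp [Prod.ext_iff, hrt]),
            card_singleton, card_pair hrt]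
        · -- three distinct roots r, t, u
          have hru : r ≠ u := fun h => hur h.symm
          have htu : t ≠ u := fun h => hut h.symm
          have hR : Rset a c d = {r, t, u} := by
            ext x
            rw [mem_Rset_of_fac hsplit]
            simp only [mem_insert, mem_singleton]
          have hF : Fib a c d
              = {(r,t,u), (r,u,t), (t,r,u), (t,u,r), (u,r,t), (u,t,r)} := by
            ext ⟨w1, w2, w3⟩
            rw [mem_Fib']
            simp only [mem_insert, mem_singleton, Prod.mk.injEq]
            constructor
            · rintro ⟨hp, hnc⟩
              have hd := cubic_eq (hp.trans hsplit.symm)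
              tauto
            · intro hw
              refine ⟨?_, ?_⟩
              · rcases hw with ⟨e1,e2,e3⟩|⟨e1,e2,e3⟩|⟨e1,e2,e3⟩|⟨e1,e2,e3⟩|⟨e1,e2,e3⟩|⟨e1,e2,e3⟩ <;>
                  subst e1 <;> subst e2 <;> subst e3 <;> linear_combination hsplit
              · rcases hw with ⟨e1,e2,e3⟩|⟨e1,e2,e3⟩|⟨e1,e2,e3⟩|⟨e1,e2,e3⟩|⟨e1,e2,e3⟩|⟨e1,e2,e3⟩ <;>
                  subst e1 <;> subst e2 <;> subst e3 <;>
                  rintro ⟨ha, hb⟩ <;> first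
                    | exact hrt (by tauto)
                    | exact hru (by tauto)
                    | exact htu (by tauto)
          rw [hR, hF]
          rw [card_insert_of_notMem (by simp [Prod.ext_iff, hrt, hru, htu, hur, hut, htr]),
            card_insert_of_notMem (by simp [Prod.ext_iff, hrt, hru, htu, hur, hut, htr]),
            card_insert_of_notMem (by simp [Prod.ext_iff, hrt, hru, htu, hur, hut, htr]),
            card_insert_of_notMem (by simp [Prod.ext_iff, hrt, hru, htu, hur, hut, htr]),
            card_insert_of_notMem (by simp [Prod.ext_iff, hrt, hru, htu, hur, hut, htr]),
            card_singleton,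
            card_insert_of_notMem (by simp [Prod.ext_iff, hrt, hru, htu, hur, hut, htr]),
            card_insert_of_notMem (by simp [Prod.ext_iff, hrt, hru, htu, hur, hut, htr]),
            card_singleton]


lemma sum_R (a : F) : ∑ cd : F × F, (Rset a cd.1 cd.2).card = Fintype.card F ^ 2 := by
  rw [Fintype.sum_prod_type]
  have hc : ∀ c : F, ∑ d : F, (Rset a c d).card = Fintype.card F := by
    intro c
    have h := Finset.card_eq_sum_card_fiberwise
      (f := fun x : F => x^3 + a*x^2 - c*x) (s := univ) (t := univ) (fun x _ => mem_univ _)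
    rw [Finset.card_univ] at h
    calc ∑ d : F, (Rset a c d).card
        = ∑ d : F, (univ.filter fun x : F => x^3 + a*x^2 - c*x = d).card := by
          refine Finset.sum_congr rfl fun d _ => ?_
          congr 1
          ext x
          simp only [Rset, mem_filter, mem_univ, true_and]
          constructor <;> intro h' <;> linear_combination h'
      _ = Fintype.card F := h.symm
  rw [Finset.sum_congr rfl (fun c _ => hc c), Finset.sum_const, Finset.card_univ,
    smul_eq_mul, sq]

lemma sum_Fib (a : F) : ∑ cd : F × F, (Fib a cd.1 cd.2).card = (Uset a).card := by
  have h := Finset.card_eq_sum_card_fiberwise (f := σm) (s := Uset a) (t := univ)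
    (fun w _ => mem_univ _)
  rw [h]
  refine Finset.sum_congr rfl fun cd _ => ?_
  congr 1

lemma card_U (a : F) :
    (Uset a).card + (univ.filter fun r : F => r + r + r = -a).card
      = Fintype.card F ^ 2 := by
  have hT : (univ.filter fun w : F × F × F => w.1 + w.2.1 + w.2.2 = -a).card
      = Fintype.card F ^ 2 := by
    have h := Finset.card_nbij'
      (s := univ.filter fun w : F × F × F => w.1 + w.2.1 + w.2.2 = -a)
      (t := (univ : Finset (F × F)))
      (fun w => (w.1, w.2.1)) (fun p => (p.1, p.2, -a - p.1 - p.2))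
      (fun w _ => mem_univ _)
      (fun p _ => by simp only [mem_coe, mem_filter, mem_univ, true_and]; ring)
      (fun w hw => by
        simp only [mem_coe, mem_filter, mem_univ, true_and] at hw
        obtain ⟨w1, w2, w3⟩ := w
        have hw' : w1 + w2 + w3 = -a := hw
        simp only [Prod.mk.injEq, true_and]
        linear_combination -hw')
      (fun p _ => rfl)
    rw [h, Finset.card_univ, Fintype.card_prod, sq]
  have hC : ((univ.filter fun w : F × F × F => w.1 + w.2.1 + w.2.2 = -a).filter
        fun w => w.1 = w.2.1 ∧ w.2.1 = w.2.2).card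
      = (univ.filter fun r : F => r + r + r = -a).card := by
    apply Finset.card_nbij' (fun w => w.1) (fun r => (r, r, r))
    · intro w hw
      simp only [mem_coe, mem_filter, mem_univ, true_and] at hw ⊢
      obtain ⟨h1, h2, h3⟩ := hw
      rw [h2, h3] at h1 ⊢
      exact h1
    · intro r hr
      simp only [mem_coe, mem_filter, mem_univ, true_and] at hr
      refine mem_filter.mpr ⟨mem_filter.mpr ⟨mem_univ _, hr⟩, rfl, rfl⟩
    · intro w hw
      simp only [mem_coe, mem_filter, mem_univ, true_and] at hw
      obtain ⟨w1, w2, w3⟩ := w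
      obtain ⟨h1, h2, h3⟩ := hw
      have h2' : w1 = w2 := h2
      have h3' : w2 = w3 := h3
      simp only [Prod.mk.injEq, true_and]
      exact ⟨h2', h2'.trans h3'⟩

    · intro r _
      rfl
  have hU : Uset a = (univ.filter fun w : F × F × F => w.1 + w.2.1 + w.2.2 = -a).filter
      fun w => ¬(w.1 = w.2.1 ∧ w.2.1 = w.2.2) := by
    unfold Uset
    rw [filter_filter]
  have h2 := Finset.card_filter_add_card_filter_not
    (s := univ.filter fun w : F × F × F => w.1 + w.2.1 + w.2.2 = -a)
    (p := fun w => w.1 = w.2.1 ∧ w.2.1 = w.2.2)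
  rw [hU]
  omega

lemma main_count (a : F) :
    3 * (univ.filter fun cd : F × F => ∀ x : F, x^3 + a*x^2 ≠ cd.1*x + cd.2).card
      + (univ.filter fun r : F => r + r + r = -a).card = Fintype.card F ^ 2 := by
  have hsum : ∑ cd : F × F, ((Fib a cd.1 cd.2).card + 3)
      = ∑ cd : F × F, ((if ∀ x : F, x^3 + a*x^2 ≠ cd.1*x + cd.2 then 3 else 0)
          + 3 * (Rset a cd.1 cd.2).card) :=
    Finset.sum_congr rfl fun cd _ => key a cd.1 cd.2
  rw [Finset.sum_add_distrib, Finset.sum_add_distrib, sum_Fib] at hsum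
  have e1 : ∑ _cd : F × F, 3 = 3 * Fintype.card F ^ 2 := by
    rw [Finset.sum_const, Finset.card_univ, Fintype.card_prod, smul_eq_mul, sq]; ring
  have e2 : ∑ cd : F × F, (if ∀ x : F, x^3 + a*x^2 ≠ cd.1*x + cd.2 then 3 else 0)
      = 3 * (univ.filter fun cd : F × F => ∀ x : F, x^3 + a*x^2 ≠ cd.1*x + cd.2).card := by
    rw [← Finset.sum_filter, Finset.sum_const, smul_eq_mul, mul_comm]
  have e3 : ∑ cd : F × F, 3 * (Rset a cd.1 cd.2).card = 3 * Fintype.card F ^ 2 := by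
    rw [← Finset.mul_sum, sum_R]
  rw [e1, e2, e3] at hsum
  have h4 := card_U a
  omega

end Counting
end S17

theorem stmt17 (p : ℕ) (hp : p.Prime)
    {F : Type*} [Field F] [Fintype F] (hchar : CharP F p) (a : F) :
    (p ≠ 3 →
      3 * Nat.card {cd : F × F // ∀ x : F, x ^ 3 + a * x ^ 2 ≠ cd.1 * x + cd.2}
        = Fintype.card F ^ 2 - 1) ∧
    (p = 3 → a ≠ 0 →
      3 * Nat.card {cd : F × F // ∀ x : F, x ^ 3 + a * x ^ 2 ≠ cd.1 * x + cd.2}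
        = Fintype.card F ^ 2) ∧
    (p = 3 → a = 0 →
      3 * Nat.card {cd : F × F // ∀ x : F, x ^ 3 + a * x ^ 2 ≠ cd.1 * x + cd.2}
        = Fintype.card F * (Fintype.card F - 1)) := by
  classical
  have hN : Nat.card {cd : F × F // ∀ x : F, x ^ 3 + a * x ^ 2 ≠ cd.1 * x + cd.2}
      = (Finset.univ.filter fun cd : F × F =>
          ∀ x : F, x ^ 3 + a * x ^ 2 ≠ cd.1 * x + cd.2).card := by
    rw [Nat.card_eq_fintype_card, Fintype.card_subtype]
  have main := S17.main_count (F := F) a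
  rw [← hN] at main
  refine ⟨?_, ?_, ?_⟩
  · intro hp3
    have h3 : (3 : F) ≠ 0 := by
      intro h
      have hd : p ∣ 3 := (CharP.cast_eq_zero_iff F p 3).mp (by exact_mod_cast h)
      exact hp3 ((Nat.prime_dvd_prime_iff_eq hp (by norm_num)).mp hd)
    have hB : (Finset.univ.filter fun r : F => r + r + r = -a).card = 1 := by
      rw [Finset.card_eq_one]
      refine ⟨-a / 3, ?_⟩
      ext r
      simp only [Finset.mem_filter, Finset.mem_univ, true_and, Finset.mem_singleton]
      rw [eq_div_iff h3]
      constructor <;> intro h <;> linear_combination h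
    rw [hB] at main
    omega
  · intro hp3 ha
    subst hp3
    have h3 : (3 : F) = 0 := by exact_mod_cast CharP.cast_eq_zero F 3
    have hB : (Finset.univ.filter fun r : F => r + r + r = -a).card = 0 := by
      rw [Finset.card_eq_zero, Finset.filter_eq_empty_iff]
      intro r _ h
      exact ha (by linear_combination h - r * h3)
    rw [hB] at main
    omega
  · intro hp3 ha
    subst hp3
    subst ha
    have h3 : (3 : F) = 0 := by exact_mod_cast CharP.cast_eq_zero F 3
    have hB : (Finset.univ.filter fun r : F => r + r + r = -(0:F)).card
        = Fintype.card F := by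
      rw [Finset.filter_true_of_mem, Finset.card_univ]
      intro r _
      linear_combination r * h3
    rw [hB] at main
    have e : Fintype.card F ^ 2 = Fintype.card F * (Fintype.card F - 1) + Fintype.card F := by
      obtain ⟨k, hk⟩ := Nat.exists_eq_add_of_le (Fintype.card_pos (α := F))
      rw [hk]
      simp only [Nat.add_sub_cancel_left]
      ring
    rw [e] at main
    omega
end

section
/- Let q be a prime power, let s, c_1, c_2 ∈ F_q with c_1 ≠ c_2, and let f : F_q → F_q be a function such that for every x ∈ F_q either f(x) = s·x + c_1 or f(x) = s·x + c_2 (so the graph of f is contained in the union of two parallel affine lines). Let A be the number of x ∈ F_q with f(x) = s·x + c_1 and let B = q − A, and assume A ≥ 1 and B ≥ 1. Then v_0(f) = q − 2 + A·B, and for every i ≥ 3, v_i(f) = (1 if A = i, else 0) + (1 if B = i, else 0). -/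
open Finset

theorem stmt18 {F : Type*} [Field F] [Fintype F] (s c₁ c₂ : F) (hc : c₁ ≠ c₂)
    (f : F → F) (hf : ∀ x : F, f x = s * x + c₁ ∨ f x = s * x + c₂)
    (A B : ℕ) (hA : A = Nat.card {x : F // f x = s * x + c₁})
    (hB : B = Fintype.card F - A) (hA1 : 1 ≤ A) (hB1 : 1 ≤ B) :
    interDist f 0 = Fintype.card F - 2 + A * B ∧
    ∀ i : ℕ, 3 ≤ i →
      interDist f i = (if A = i then 1 else 0) + (if B = i then 1 else 0) := by
  classical
  set q := Fintype.card F with hq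
  have hc21 : c₂ - c₁ ≠ 0 := sub_ne_zero.mpr (Ne.symm hc)
  set S : Finset F := Finset.univ.filter (fun x => f x = s * x + c₁) with hS
  have hmemS : ∀ x : F, x ∈ S ↔ f x = s * x + c₁ := by
    intro x; simp [hS]
  have hmemSc : ∀ x : F, x ∉ S ↔ f x = s * x + c₂ := by
    intro x
    constructor
    · intro h
      rcases hf x with h1 | h2
      · exact absurd ((hmemS x).mpr h1) h
      · exact h2
    · intro h h'
      have h1 := (hmemS x).mp h'
      exact hc (by have := h1.symm.trans h; exact add_left_cancel this)
  have hAS : S.card = A := by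
    rw [hA, Nat.card_eq_fintype_card, Fintype.card_subtype]
  have hAq : A ≤ q := by
    rw [← hAS]
    simpa using Finset.card_le_univ S
  have hq2 : 2 ≤ q := by omega
  have hScard : Sᶜ.card = B := by
    rw [Finset.card_compl, hAS, ← hq, ← hB]
  set N : F × F → ℕ := fun p => (Finset.univ.filter fun x => f x = p.1 * x + p.2).card
    with hN
  have hID : ∀ i : ℕ, interDist f i = (Finset.univ.filter fun p => N p = i).card := by
    intro i
    unfold interDist
    rw [Nat.card_eq_fintype_card, Fintype.card_subtype]
    refine congrArg Finset.card (Finset.filter_congr ?_)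
    intro p _
    rw [Nat.card_eq_fintype_card, Fintype.card_subtype, hN]
  have hNs1 : N (s, c₁) = A := by
    show (Finset.univ.filter fun x => f x = s * x + c₁).card = A
    rw [← hS, hAS]
  have hNs2 : N (s, c₂) = B := by
    show (Finset.univ.filter fun x => f x = s * x + c₂).card = B
    rw [← hScard]
    congr 1
    ext x
    simp only [Finset.mem_filter, Finset.mem_univ, true_and, Finset.mem_compl]
    exact (hmemSc x).symm
  have hNs0 : ∀ b : F, b ≠ c₁ → b ≠ c₂ → N (s, b) = 0 := by
    intro b hb1 hb2
    show (Finset.univ.filter fun x => f x = s * x + b).card = 0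
    rw [Finset.card_eq_zero, Finset.filter_eq_empty_iff]
    intro x _ hx
    rcases hf x with h1 | h2
    · exact hb1 (add_left_cancel (hx.symm.trans h1))
    · exact hb2 (add_left_cancel (hx.symm.trans h2))
  have hline : ∀ (a b x c : F), a ≠ s → (s * x + c = a * x + b ↔ x = (b - c) / (s - a)) := by
    intro a b x c h
    have ht : s - a ≠ 0 := sub_ne_zero.mpr (Ne.symm h)
    rw [eq_div_iff ht]
    constructor <;> intro h' <;> linear_combination h'
  have hsol : ∀ (a b x : F), a ≠ s →
      (f x = a * x + b ↔
        ((x = (b - c₁) / (s - a) ∧ (b - c₁) / (s - a) ∈ S) ∨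
         (x = (b - c₂) / (s - a) ∧ (b - c₂) / (s - a) ∉ S))) := by
    intro a b x h
    constructor
    · intro hx
      rcases hf x with h1 | h2
      · left
        have hxe := (hline a b x c₁ h).mp (h1.symm.trans hx)
        exact ⟨hxe, (hmemS _).mpr (hxe ▸ h1)⟩
      · right
        have hxe := (hline a b x c₂ h).mp (h2.symm.trans hx)
        exact ⟨hxe, (hmemSc _).mpr (hxe ▸ h2)⟩
    · rintro (⟨rfl, hxS⟩ | ⟨rfl, hxS⟩)
      · rw [(hmemS _).mp hxS]
        exact (hline a b _ c₁ h).mpr rfl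
      · rw [(hmemSc _).mp hxS]
        exact (hline a b _ c₂ h).mpr rfl
  have hNle2 : ∀ a b : F, a ≠ s → N (a, b) ≤ 2 := by
    intro a b h
    show (Finset.univ.filter fun x => f x = a * x + b).card ≤ 2
    have hsub : (Finset.univ.filter fun x => f x = a * x + b)
        ⊆ {(b - c₁) / (s - a), (b - c₂) / (s - a)} := by
      intro x hx
      simp only [Finset.mem_filter, Finset.mem_univ, true_and] at hx
      rcases (hsol a b x h).mp hx with ⟨rfl, _⟩ | ⟨rfl, _⟩ <;> simp
    calc (Finset.univ.filter fun x => f x = a * x + b).card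
        ≤ ({(b - c₁) / (s - a), (b - c₂) / (s - a)} : Finset F).card :=
          Finset.card_le_card hsub
      _ ≤ 2 := Finset.card_insert_le _ _
  have hN0iff : ∀ a b : F, a ≠ s →
      (N (a, b) = 0 ↔ ((b - c₁) / (s - a) ∉ S ∧ (b - c₂) / (s - a) ∈ S)) := by
    intro a b h
    show (Finset.univ.filter fun x => f x = a * x + b).card = 0 ↔ _
    rw [Finset.card_eq_zero, Finset.filter_eq_empty_iff]
    constructor
    · intro hemp
      constructor
      · intro huS
        exact hemp (Finset.mem_univ _) ((hsol a b _ h).mpr (Or.inl ⟨rfl, huS⟩))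
      · by_contra hvS
        exact hemp (Finset.mem_univ _) ((hsol a b _ h).mpr (Or.inr ⟨rfl, hvS⟩))
    · rintro ⟨hu, hv⟩ x _ hx
      rcases (hsol a b x h).mp hx with ⟨_, hxS⟩ | ⟨_, hxS⟩
      · exact hu hxS
      · exact hxS hv
  constructor
  · -- v₀ = q - 2 + A * B
    rw [hID 0]
    have hZ : (Finset.univ.filter fun p : F × F => N p = 0)
        = (({s} : Finset F) ×ˢ ({c₁, c₂} : Finset F)ᶜ)
          ∪ (Finset.univ.filter fun p : F × F =>
              p.1 ≠ s ∧ (p.2 - c₁) / (s - p.1) ∉ S ∧ (p.2 - c₂) / (s - p.1) ∈ S) := by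
      ext ⟨a, b⟩
      simp only [Finset.mem_filter, Finset.mem_univ, true_and, Finset.mem_union,
        Finset.mem_product, Finset.mem_singleton, Finset.mem_compl, Finset.mem_insert]
      constructor
      · intro h0
        by_cases has : a = s
        · subst has
          left
          refine ⟨rfl, ?_⟩
          rintro (rfl | rfl)
          · rw [hNs1] at h0; omega
          · rw [hNs2] at h0; omega
        · right
          exact ⟨has, (hN0iff a b has).mp h0⟩
      · rintro (⟨rfl, hb⟩ | ⟨has, h2⟩)
        · push_neg at hb
          exact hNs0 b hb.1 hb.2
        · exact (hN0iff a b has).mpr h2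
    have hdisj : Disjoint (({s} : Finset F) ×ˢ ({c₁, c₂} : Finset F)ᶜ)
        (Finset.univ.filter fun p : F × F =>
          p.1 ≠ s ∧ (p.2 - c₁) / (s - p.1) ∉ S ∧ (p.2 - c₂) / (s - p.1) ∈ S) := by
      rw [Finset.disjoint_left]
      rintro ⟨a, b⟩ h1 h2
      simp only [Finset.mem_product, Finset.mem_singleton] at h1
      simp only [Finset.mem_filter] at h2
      exact h2.2.1 h1.1
    rw [hZ, Finset.card_union_of_disjoint hdisj]
    have c1 : (({s} : Finset F) ×ˢ ({c₁, c₂} : Finset F)ᶜ).card = q - 2 := by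
      rw [Finset.card_product, Finset.card_singleton, one_mul, Finset.card_compl,
        Finset.card_pair hc]
    have c2 : (Finset.univ.filter fun p : F × F =>
        p.1 ≠ s ∧ (p.2 - c₁) / (s - p.1) ∉ S ∧ (p.2 - c₂) / (s - p.1) ∈ S).card
        = A * B := by
      rw [show A * B = (S ×ˢ Sᶜ).card from by rw [Finset.card_product, hAS, hScard]]
      apply Finset.card_bij'
        (i := fun p _ => ((p.2 - c₂) / (s - p.1), (p.2 - c₁) / (s - p.1)))
        (j := fun y _ => (s - (c₂ - c₁) / (y.2 - y.1),
          y.2 * ((c₂ - c₁) / (y.2 - y.1)) + c₁))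
      · rintro ⟨a, b⟩ hp
        simp only [Finset.mem_filter, Finset.mem_univ, true_and] at hp
        simp only [Finset.mem_product, Finset.mem_compl]
        exact ⟨hp.2.2, hp.2.1⟩
      · rintro ⟨w, u⟩ hy
        simp only [Finset.mem_product, Finset.mem_compl] at hy
        obtain ⟨hw, hu⟩ := hy
        have huw : u - w ≠ 0 := sub_ne_zero.mpr (fun h => hu (h ▸ hw))
        have hd : (c₂ - c₁) / (u - w) ≠ 0 := div_ne_zero hc21 huw
        simp only [Finset.mem_filter, Finset.mem_univ, true_and]
        have ha' : s - (c₂ - c₁) / (u - w) ≠ s := by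
          intro h
          exact hd (by linear_combination -h)
        have hsa : s - (s - (c₂ - c₁) / (u - w)) = (c₂ - c₁) / (u - w) := by ring
        have eu : (u * ((c₂ - c₁) / (u - w)) + c₁ - c₁) / (s - (s - (c₂ - c₁) / (u - w)))
            = u := by
          rw [hsa]
          field_simp
          ring
        have ew : (u * ((c₂ - c₁) / (u - w)) + c₁ - c₂) / (s - (s - (c₂ - c₁) / (u - w)))
            = w := by
          rw [hsa, div_eq_iff hd]
          field_simp
          ring
        refine ⟨ha', ?_, ?_⟩
        · rw [eu]; exact hu
        · rw [ew]; exact hw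
      · rintro ⟨a, b⟩ hp
        simp only [Finset.mem_filter, Finset.mem_univ, true_and] at hp
        have ht : s - a ≠ 0 := sub_ne_zero.mpr (Ne.symm hp.1)
        have h1 : (b - c₁) / (s - a) - (b - c₂) / (s - a) = (c₂ - c₁) / (s - a) := by
          ring
        have hne : (b - c₁) / (s - a) - (b - c₂) / (s - a) ≠ 0 := by
          rw [h1]; exact div_ne_zero hc21 ht
        simp only [Prod.mk.injEq]
        constructor
        · rw [h1]
          field_simp
          ring
        · rw [h1]
          field_simp
          ring
      · rintro ⟨w, u⟩ hy
        simp only [Finset.mem_product, Finset.mem_compl] at hy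
        obtain ⟨hw, hu⟩ := hy
        have huw : u - w ≠ 0 := sub_ne_zero.mpr (fun h => hu (h ▸ hw))
        have hd : (c₂ - c₁) / (u - w) ≠ 0 := div_ne_zero hc21 huw
        have hsa : s - (s - (c₂ - c₁) / (u - w)) = (c₂ - c₁) / (u - w) := by ring
        simp only [Prod.mk.injEq]
        constructor
        · rw [hsa, div_eq_iff hd]
          field_simp
          ring
        · rw [hsa]
          field_simp
          ring
    rw [c1, c2]
  · -- the i ≥ 3 part
    intro i hi
    rw [hID i]
    have hT : (Finset.univ.filter fun p : F × F => N p = i)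
        = ({((s, c₁) : F × F)} : Finset (F × F)).filter (fun _ => A = i)
          ∪ ({((s, c₂) : F × F)} : Finset (F × F)).filter (fun _ => B = i) := by
      ext ⟨a, b⟩
      simp only [Finset.mem_filter, Finset.mem_univ, true_and, Finset.mem_union,
        Finset.mem_singleton, Prod.mk.injEq]
      constructor
      · intro hNi
        by_cases has : a = s
        · subst has
          by_cases hb1 : b = c₁
          · subst hb1
            exact Or.inl ⟨⟨rfl, rfl⟩, hNs1.symm.trans hNi⟩
          · by_cases hb2 : b = c₂
            · subst hb2
              exact Or.inr ⟨⟨rfl, rfl⟩, hNs2.symm.trans hNi⟩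
            · rw [hNs0 b hb1 hb2] at hNi; omega
        · have := hNle2 a b has; omega
      · rintro (⟨⟨rfl, rfl⟩, hAi⟩ | ⟨⟨rfl, rfl⟩, hBi⟩)
        · rw [hNs1]; exact hAi
        · rw [hNs2]; exact hBi
    have hdisj : Disjoint
        (({((s, c₁) : F × F)} : Finset (F × F)).filter (fun _ => A = i))
        (({((s, c₂) : F × F)} : Finset (F × F)).filter (fun _ => B = i)) := by
      rw [Finset.disjoint_left]
      rintro p h1 h2
      simp only [Finset.mem_filter, Finset.mem_singleton] at h1 h2
      rw [h1.1] at h2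
      exact hc (congrArg Prod.snd h2.1)
    rw [hT, Finset.card_union_of_disjoint hdisj, Finset.filter_const, Finset.filter_const]
    split_ifs <;> simp
end

section
/- Let q be a prime power and let S be a set of q+1 points in PG(2,q). (a) If every line of PG(2,q) meets S in at most 3 points, then the number u_0(S) of lines meeting S in no point satisfies 3·u_0(S) ≥ q(q−2). (b) If every line of PG(2,q) meets S in at most 4 points and exactly c lines meet S in exactly 3 points, then 4·u_0(S) ≥ q^2 − 3q + 2c. -/
open scoped LinearAlgebra.Projectivization

/-- The number of points of `S` lying on the line of `PG(2,q)` determined by the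
(2-dimensional) subspace `W`. -/
noncomputable def lineCount {F : Type*} [Field F]
    (S : Set (ℙ F (Fin 3 → F))) (W : Submodule F (Fin 3 → F)) : ℕ :=
  Nat.card {p : ℙ F (Fin 3 → F) // p ∈ S ∧ p.submodule ≤ W}

/-- `uCount S i` is the number of lines of `PG(2,q)` meeting `S` in exactly `i` points. -/
noncomputable def uCount {F : Type*} [Field F]
    (S : Set (ℙ F (Fin 3 → F))) (i : ℕ) : ℕ :=
  Nat.card {W : Submodule F (Fin 3 → F) // Module.finrank F W = 2 ∧ lineCount S W = i}

open Module

namespace Stmt19Aux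

variable {F : Type*} [Field F] [Fintype F]

lemma card_proj_mul (M : Type*) [AddCommGroup M] [Module F M] [Finite M] :
    Nat.card (ℙ F M) * (Fintype.card F - 1) = Nat.card M - 1 := by
  haveI : Finite (ℙ F M) := Quotient.finite _
  have key : ∀ (p : ℙ F M) (u : Fˣ), (u : F) • p.rep ≠ 0 := fun p u => by
    simp [smul_eq_zero, Projectivization.rep_nonzero]
  have e : ℙ F M × Fˣ ≃ {v : M // v ≠ 0} := by
    refine Equiv.ofBijective (fun x => ⟨(x.2 : F) • x.1.rep, key _ _⟩) ⟨?_, ?_⟩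
    · rintro ⟨p, u⟩ ⟨p', u'⟩ h
      simp only [Subtype.mk_eq_mk] at h
      have hp : p = p' := by
        have h1 : Projectivization.mk F ((u:F) • p.rep) (key p u)
            = Projectivization.mk F p.rep p.rep_nonzero :=
          (Projectivization.mk_eq_mk_iff F _ _ _ _).mpr ⟨u, rfl⟩
        have h2 : Projectivization.mk F ((u':F) • p'.rep) (key p' u')
            = Projectivization.mk F p'.rep p'.rep_nonzero :=
          (Projectivization.mk_eq_mk_iff F _ _ _ _).mpr ⟨u', rfl⟩
        rw [Projectivization.mk_rep] at h1 h2
        rw [← h1, ← h2]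
        congr 1
      subst hp
      have hz : ((u : F) - u') • p.rep = 0 := by rw [sub_smul, h, sub_self]
      rcases smul_eq_zero.mp hz with h' | h'
      · have : (u : F) = u' := by linear_combination h'
        exact Prod.ext rfl (Units.ext this)
      · exact absurd h' p.rep_nonzero
    · rintro ⟨v, hv⟩
      obtain ⟨u, hu⟩ := Projectivization.exists_smul_eq_mk_rep F v hv
      refine ⟨⟨Projectivization.mk F v hv, u⁻¹⟩, ?_⟩
      simp only [Subtype.mk_eq_mk]
      rw [← hu, Units.smul_def, smul_smul]
      simp
  have h1 : Nat.card (ℙ F M) * Nat.card Fˣ = Nat.card {v : M // v ≠ 0} := by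
    rw [← Nat.card_prod]; exact Nat.card_congr e
  haveI : Fintype M := Fintype.ofFinite M
  classical
  rw [Nat.card_eq_fintype_card (α := {v : M // v ≠ 0}), Fintype.card_subtype_compl,
    Fintype.card_subtype_eq] at h1
  rw [Nat.card_eq_fintype_card (α := Fˣ), Fintype.card_units] at h1
  rw [h1, Nat.card_eq_fintype_card]

lemma card_proj_of_card {M : Type*} [AddCommGroup M] [Module F M] [Finite M] {n : ℕ}
    (h : Nat.card M = Fintype.card F ^ n) (hn : n ≠ 0) :
    Nat.card (ℙ F M) = ∑ i ∈ Finset.range n, Fintype.card F ^ i := by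
  have hq : 1 < Fintype.card F := Fintype.one_lt_card
  have hmul := card_proj_mul (F := F) M
  rw [h] at hmul
  have hgeom : (∑ i ∈ Finset.range n, Fintype.card F ^ i) * (Fintype.card F - 1)
      = Fintype.card F ^ n - 1 := by
    have h1 : (1:ℕ) ≤ Fintype.card F ^ n := Nat.one_le_pow _ _ (by omega)
    have h2 : (1:ℕ) ≤ Fintype.card F := by omega
    zify [h1, h2]
    exact geom_sum_mul _ n
  have hpos : 0 < Fintype.card F - 1 := by omega
  exact Nat.eq_of_mul_eq_mul_right hpos (hmul.trans hgeom.symm)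

lemma my_card_module (M : Type*) [AddCommGroup M] [Module F M] [Finite M] :
    Nat.card M = Fintype.card F ^ (finrank F M) := by
  haveI : Fintype M := Fintype.ofFinite M
  rw [Nat.card_eq_fintype_card]
  exact card_eq_pow_finrank

omit [Fintype F] in
lemma equiv_points_on (M : Type*) [AddCommGroup M] [Module F M] (W : Submodule F M) :
    Nonempty ({p : ℙ F M // p.submodule ≤ W} ≃ ℙ F W) := by
  have hinj : Function.Injective W.subtype := Submodule.injective_subtype W
  let f : ℙ F W → ℙ F M := Projectivization.map W.subtype hinj
  have hfinj : Function.Injective f := Projectivization.map_injective W.subtype hinj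
  have hrange : ∀ p : ℙ F M, p.submodule ≤ W ↔ p ∈ Set.range f := by
    intro p
    constructor
    · intro h
      have hrep : p.rep ∈ W := by
        apply h
        rw [Projectivization.submodule_eq]
        exact Submodule.mem_span_singleton_self p.rep
      refine ⟨Projectivization.mk F (⟨p.rep, hrep⟩ : W)
        (by simp [Projectivization.rep_nonzero, Subtype.ext_iff]), ?_⟩
      show Projectivization.map W.subtype hinj _ = p
      rw [Projectivization.map_mk]
      simp [Projectivization.mk_rep]
    · rintro ⟨p', rfl⟩
      induction' p' with v hv
      show (Projectivization.map W.subtype hinj (Projectivization.mk F v hv)).submodule ≤ W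
      rw [Projectivization.map_mk, Projectivization.submodule_mk]
      rw [Submodule.span_singleton_le_iff_mem]
      exact v.2
  exact ⟨(Equiv.subtypeEquiv (Equiv.refl _) (fun p => by simpa using hrange p)).trans
    (Equiv.ofInjective f hfinj).symm⟩

lemma card_points_on {M : Type*} [AddCommGroup M] [Module F M] [Finite M]
    (T : Submodule F M) (hT : finrank F T = 2) :
    Nat.card {p : ℙ F M // p.submodule ≤ T} = Fintype.card F + 1 := by
  obtain ⟨e⟩ := equiv_points_on (F := F) M T
  rw [Nat.card_congr e,
    card_proj_of_card (n := 2) (by rw [my_card_module (F := F) ↥T, hT]) two_ne_zero]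
  simp [Finset.sum_range_succ, add_comm]

omit [Fintype F] in
lemma equiv_rank1_le {M : Type*} [AddCommGroup M] [Module F M] (T : Submodule F M) :
    Nonempty ({U : Submodule F M // finrank F U = 1 ∧ U ≤ T}
      ≃ {p : ℙ F M // p.submodule ≤ T}) := by
  refine ⟨{ toFun := fun U => ⟨Projectivization.mk'' U.1 U.2.1, by
              rw [Projectivization.submodule_mk'']; exact U.2.2⟩
            invFun := fun p => ⟨p.1.submodule, p.1.finrank_submodule, p.2⟩
            left_inv := fun U => Subtype.ext (Projectivization.submodule_mk'' _ _)
            right_inv := fun p => Subtype.ext (Projectivization.mk''_submodule _) }⟩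

lemma card_rank1_le {M : Type*} [AddCommGroup M] [Module F M] [Finite M]
    (T : Submodule F M) (hT : finrank F T = 2) :
    Nat.card {U : Submodule F M // finrank F U = 1 ∧ U ≤ T} = Fintype.card F + 1 := by
  obtain ⟨e⟩ := equiv_rank1_le (F := F) T
  rw [Nat.card_congr e, card_points_on T hT]

omit [Fintype F] in
lemma my_finrank_dualAnn {M : Type*} [AddCommGroup M] [Module F M] [FiniteDimensional F M]
    (W : Submodule F M) :
    finrank F W + finrank F W.dualAnnihilator = finrank F M := by
  have h1 := Submodule.finrank_quotient_add_finrank W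
  have h2 : finrank F (M ⧸ W) = finrank F W.dualAnnihilator :=
    LinearEquiv.finrank_eq (Subspace.quotEquivAnnihilator W)
  omega

omit [Fintype F] in
lemma dualEquiv {M : Type*} [AddCommGroup M] [Module F M] [FiniteDimensional F M]
    (P : Submodule F M → Prop) (Q : Submodule F (Dual F M) → Prop)
    (h : ∀ W, P W ↔ Q W.dualAnnihilator) :
    Nonempty ({W : Submodule F M // P W} ≃ {U : Submodule F (Dual F M) // Q U}) :=
  ⟨(Subspace.orderIsoFiniteDimensional (K := F) (V := M)).toEquiv.subtypeEquiv fun W => by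
    exact h W⟩

lemma hV3 : finrank F (Fin 3 → F) = 3 := by simp

lemma card_lines :
    Nat.card {W : Submodule F (Fin 3 → F) // finrank F W = 2}
      = Fintype.card F ^ 2 + Fintype.card F + 1 := by
  haveI : Finite (Dual F (Fin 3 → F)) := Module.finite_of_finite F
  obtain ⟨e⟩ := dualEquiv (F := F) (M := (Fin 3 → F)) (fun W => finrank F W = 2)
    (fun U => finrank F U = 1) (fun W => by
      have := my_finrank_dualAnn (F := F) W
      rw [hV3] at this; omega)
  rw [Nat.card_congr e]
  have e2 : {U : Submodule F (Dual F (Fin 3 → F)) // finrank F U = 1}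
      ≃ ℙ F (Dual F (Fin 3 → F)) :=
    (Projectivization.equivSubmodule F (Dual F (Fin 3 → F))).symm
  rw [Nat.card_congr e2, card_proj_of_card (n := 3) ?_ three_ne_zero]
  · simp [Finset.sum_range_succ]; ring
  · rw [my_card_module (F := F) (Dual F (Fin 3 → F)), Subspace.dual_finrank_eq, hV3]

lemma card_lines_through (p : ℙ F (Fin 3 → F)) :
    Nat.card {W : Submodule F (Fin 3 → F) // finrank F W = 2 ∧ p.submodule ≤ W}
      = Fintype.card F + 1 := by
  haveI : Finite (Dual F (Fin 3 → F)) := Module.finite_of_finite F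
  have hl : finrank F (p.submodule) = 1 := p.finrank_submodule
  obtain ⟨e⟩ := dualEquiv (F := F) (M := (Fin 3 → F))
    (fun W => finrank F W = 2 ∧ p.submodule ≤ W)
    (fun U => finrank F U = 1 ∧ U ≤ p.submodule.dualAnnihilator) (fun W => by
      have h1 := my_finrank_dualAnn (F := F) W
      rw [hV3] at h1
      constructor
      · rintro ⟨h2, h3⟩
        exact ⟨by omega, Subspace.dualAnnihilator_le_dualAnnihilator_iff.mpr h3⟩
      · rintro ⟨h2, h3⟩
        exact ⟨by omega, Subspace.dualAnnihilator_le_dualAnnihilator_iff.mp h3⟩)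
  rw [Nat.card_congr e]
  apply card_rank1_le
  have := my_finrank_dualAnn (F := F) p.submodule
  rw [hV3, hl] at this; omega

omit [Fintype F] in
lemma unique_line (p p' : ℙ F (Fin 3 → F)) (hne : p ≠ p') :
    Nat.card {W : Submodule F (Fin 3 → F) //
      finrank F W = 2 ∧ p.submodule ≤ W ∧ p'.submodule ≤ W} = 1 := by
  have hsub : p.submodule ≠ p'.submodule := fun h => hne (Projectivization.submodule_injective h)
  have hinf : p.submodule ⊓ p'.submodule = ⊥ := by
    by_contra h
    have h1 : finrank F (p.submodule ⊓ p'.submodule : Submodule F (Fin 3 → F)) ≠ 0 := by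
      rwa [ne_eq, Submodule.finrank_eq_zero]
    have e1 : p.submodule ⊓ p'.submodule = p.submodule := by
      apply Submodule.eq_of_le_of_finrank_le inf_le_left
      rw [p.finrank_submodule]; omega
    have e2 : p.submodule ⊓ p'.submodule = p'.submodule := by
      apply Submodule.eq_of_le_of_finrank_le inf_le_right
      rw [p'.finrank_submodule]; omega
    exact hsub (e1.symm.trans e2)
  have hfr : finrank F (p.submodule ⊔ p'.submodule : Submodule F (Fin 3 → F)) = 2 := by
    have := Submodule.finrank_sup_add_finrank_inf_eq p.submodule p'.submodule
    rw [hinf, p.finrank_submodule, p'.finrank_submodule, finrank_bot] at this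
    omega
  rw [Nat.card_eq_one_iff_unique]
  constructor
  · constructor
    rintro ⟨W, hW2, hpW, hp'W⟩ ⟨W', hW'2, hpW', hp'W'⟩
    have key : ∀ (U : Submodule F (Fin 3 → F)), finrank F U = 2 → p.submodule ≤ U →
        p'.submodule ≤ U → U = p.submodule ⊔ p'.submodule := fun U hU h1 h2 =>
      (Submodule.eq_of_le_of_finrank_le (sup_le h1 h2) (by rw [hU, hfr])).symm
    simp only [Subtype.mk_eq_mk]
    rw [key W hW2 hpW hp'W, key W' hW'2 hpW' hp'W']
  · exact ⟨⟨p.submodule ⊔ p'.submodule, hfr, le_sup_left, le_sup_right⟩⟩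

lemma card_offdiag (α : Type*) [Finite α] :
    Nat.card {x : α × α // x.1 ≠ x.2} = Nat.card α * Nat.card α - Nat.card α := by
  haveI : Fintype α := Fintype.ofFinite α
  classical
  have ediag : α ≃ {x : α × α // x.1 = x.2} :=
    { toFun := fun a => ⟨(a, a), rfl⟩
      invFun := fun x => x.1.1
      left_inv := fun a => rfl
      right_inv := fun x => Subtype.ext (Prod.ext rfl x.2) }
  rw [Nat.card_eq_fintype_card, Fintype.card_subtype_compl, ← Fintype.card_congr ediag,
    Nat.card_eq_fintype_card, Fintype.card_prod]

lemma my_card_sigma {ι : Type*} [Fintype ι] (f : ι → Type*) [∀ i, Finite (f i)] :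
    Nat.card (Σ i, f i) = ∑ i, Nat.card (f i) := by
  classical
  haveI := fun i => Fintype.ofFinite (f i)
  simp [Nat.card_eq_fintype_card, Fintype.card_sigma]

end Stmt19Aux

namespace Stmt19Main
open Module Stmt19Aux

variable {F : Type*} [Field F] [Fintype F]

lemma sum_lineCount [Fintype {W : Submodule F (Fin 3 → F) // finrank F W = 2}]
    (S : Set (ℙ F (Fin 3 → F))) (hS : Nat.card S = Fintype.card F + 1) :
    ∑ W : {W : Submodule F (Fin 3 → F) // finrank F W = 2}, lineCount S W.1
      = (Fintype.card F + 1) * (Fintype.card F + 1) := by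
  haveI : Finite (ℙ F (Fin 3 → F)) := Quotient.finite _
  haveI : Finite ↥S := Subtype.finite
  haveI : Fintype ↥S := Fintype.ofFinite _
  have h1 : ∀ W : {W : Submodule F (Fin 3 → F) // finrank F W = 2},
      lineCount S W.1 = Nat.card {p : ℙ F (Fin 3 → F) // p ∈ S ∧ p.submodule ≤ W.1} :=
    fun _ => rfl
  simp_rw [h1]
  rw [← my_card_sigma]
  have e : (Σ W : {W : Submodule F (Fin 3 → F) // finrank F W = 2},
        {p : ℙ F (Fin 3 → F) // p ∈ S ∧ p.submodule ≤ W.1})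
      ≃ (Σ p : ↥S, {W : {W : Submodule F (Fin 3 → F) // finrank F W = 2} //
          (p : ℙ F (Fin 3 → F)).submodule ≤ W.1}) :=
    { toFun := fun x => ⟨⟨x.2.1, x.2.2.1⟩, ⟨x.1, x.2.2.2⟩⟩
      invFun := fun y => ⟨y.2.1, ⟨y.1.1, y.1.2, y.2.2⟩⟩
      left_inv := fun x => rfl
      right_inv := fun y => rfl }
  rw [Nat.card_congr e, my_card_sigma]
  have h2 : ∀ p : ↥S, Nat.card {W : {W : Submodule F (Fin 3 → F) // finrank F W = 2} //
      (p : ℙ F (Fin 3 → F)).submodule ≤ W.1} = Fintype.card F + 1 := by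
    intro p
    rw [Nat.card_congr (Equiv.subtypeSubtypeEquivSubtypeInter _ _)]
    exact card_lines_through (p : ℙ F (Fin 3 → F))
  simp_rw [h2]
  rw [Finset.sum_const, Finset.card_univ, ← Nat.card_eq_fintype_card, hS, smul_eq_mul]

lemma sum_pairCount [Fintype {W : Submodule F (Fin 3 → F) // finrank F W = 2}]
    (S : Set (ℙ F (Fin 3 → F))) (hS : Nat.card S = Fintype.card F + 1) :
    ∑ W : {W : Submodule F (Fin 3 → F) // finrank F W = 2},
      (lineCount S W.1 * lineCount S W.1 - lineCount S W.1)
    = (Fintype.card F + 1) * (Fintype.card F + 1) - (Fintype.card F + 1) := by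
  haveI : Finite (ℙ F (Fin 3 → F)) := Quotient.finite _
  haveI : Finite ↥S := Subtype.finite
  have h1 : ∀ W : {W : Submodule F (Fin 3 → F) // finrank F W = 2},
      lineCount S W.1 * lineCount S W.1 - lineCount S W.1
      = Nat.card {x : {p : ℙ F (Fin 3 → F) // p ∈ S ∧ p.submodule ≤ W.1}
          × {p : ℙ F (Fin 3 → F) // p ∈ S ∧ p.submodule ≤ W.1} // x.1 ≠ x.2} := fun W =>
    (card_offdiag _).symm
  simp_rw [h1]
  rw [← my_card_sigma]
  have e : (Σ W : {W : Submodule F (Fin 3 → F) // finrank F W = 2},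
        {x : {p : ℙ F (Fin 3 → F) // p ∈ S ∧ p.submodule ≤ W.1}
          × {p : ℙ F (Fin 3 → F) // p ∈ S ∧ p.submodule ≤ W.1} // x.1 ≠ x.2})
      ≃ (Σ y : {y : ↥S × ↥S // y.1 ≠ y.2},
          {W : {W : Submodule F (Fin 3 → F) // finrank F W = 2} //
            (y.1.1 : ℙ F (Fin 3 → F)).submodule ≤ W.1
              ∧ (y.1.2 : ℙ F (Fin 3 → F)).submodule ≤ W.1}) :=
    { toFun := fun x => ⟨⟨(⟨x.2.1.1.1, x.2.1.1.2.1⟩, ⟨x.2.1.2.1, x.2.1.2.2.1⟩),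
          fun h => x.2.2 (Subtype.ext (by exact congrArg (fun z : ↥S => (z : ℙ F (Fin 3 → F))) h))⟩,
        ⟨x.1, x.2.1.1.2.2, x.2.1.2.2.2⟩⟩
      invFun := fun y => ⟨y.2.1,
        ⟨(⟨y.1.1.1.1, y.1.1.1.2, y.2.2.1⟩, ⟨y.1.1.2.1, y.1.1.2.2, y.2.2.2⟩),
          fun h => y.1.2 (Subtype.ext (by exact congrArg (fun z : {p : ℙ F (Fin 3 → F) // p ∈ S ∧ p.submodule ≤ (y.2.1 : Submodule F (Fin 3 → F))} => (z : ℙ F (Fin 3 → F))) h))⟩⟩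
      left_inv := fun x => rfl
      right_inv := fun y => rfl }
  haveI : Fintype {y : ↥S × ↥S // y.1 ≠ y.2} := Fintype.ofFinite _
  rw [Nat.card_congr e, my_card_sigma]
  have h2 : ∀ y : {y : ↥S × ↥S // y.1 ≠ y.2},
      Nat.card {W : {W : Submodule F (Fin 3 → F) // finrank F W = 2} //
        (y.1.1 : ℙ F (Fin 3 → F)).submodule ≤ W.1
          ∧ (y.1.2 : ℙ F (Fin 3 → F)).submodule ≤ W.1} = 1 := by
    intro y
    rw [Nat.card_congr (Equiv.subtypeSubtypeEquivSubtypeInter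
      (fun W : Submodule F (Fin 3 → F) => finrank F W = 2)
      (fun W => (y.1.1 : ℙ F (Fin 3 → F)).submodule ≤ W
        ∧ (y.1.2 : ℙ F (Fin 3 → F)).submodule ≤ W))]
    exact unique_line _ _ (fun h => y.2 (Subtype.ext h))
  simp_rw [h2]
  rw [Finset.sum_const, Finset.card_univ, ← Nat.card_eq_fintype_card, card_offdiag, hS,
    smul_eq_mul, mul_one]

end Stmt19Main

open Module Stmt19Aux Stmt19Main in
theorem stmt19 {F : Type*} [Field F] [Fintype F]
    (S : Set (ℙ F (Fin 3 → F))) (hS : Nat.card S = Fintype.card F + 1) :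
    ((∀ W : Submodule F (Fin 3 → F), Module.finrank F W = 2 → lineCount S W ≤ 3) →
      (Fintype.card F : ℤ) * ((Fintype.card F : ℤ) - 2) ≤ 3 * (uCount S 0 : ℤ)) ∧
    (∀ c : ℕ, (∀ W : Submodule F (Fin 3 → F), Module.finrank F W = 2 → lineCount S W ≤ 4) →
      uCount S 3 = c →
      (Fintype.card F : ℤ) ^ 2 - 3 * (Fintype.card F : ℤ) + 2 * (c : ℤ)
        ≤ 4 * (uCount S 0 : ℤ)) := by
  classical
  haveI : Fintype {W : Submodule F (Fin 3 → F) // finrank F W = 2} := Fintype.ofFinite _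
  set q : ℕ := Fintype.card F with hq
  set L := {W : Submodule F (Fin 3 → F) // finrank F W = 2}
  set n : L → ℕ := fun W => lineCount S W.1 with hn
  -- fact A
  have hA : (Fintype.card L : ℤ) = (q:ℤ)^2 + q + 1 := by
    rw [← Nat.card_eq_fintype_card, card_lines (F := F)]; push_cast; ring
  -- fact B
  have hB : ∑ W : L, ((n W : ℤ)) = ((q:ℤ) + 1)^2 := by
    have := sum_lineCount S hS
    have hcast := congrArg (Nat.cast : ℕ → ℤ) this
    push_cast at hcast
    rw [hcast]; ring
  -- fact C
  have hC : ∑ W : L, ((n W : ℤ)^2 - (n W : ℤ)) = (q:ℤ)^2 + q := by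
    have hnat := sum_pairCount S hS
    have hterm : ∀ W : L, ((n W * n W - n W : ℕ) : ℤ) = (n W : ℤ)^2 - (n W : ℤ) := by
      intro W
      have hle : n W ≤ n W * n W := by
        rcases Nat.eq_zero_or_pos (n W) with h | h
        · simp [h]
        · exact Nat.le_mul_of_pos_left _ h
      push_cast [hle]
      ring
    have hsum : ∑ W : L, ((n W * n W - n W : ℕ) : ℤ)
        = ((q + 1) * (q + 1) - (q + 1) : ℕ) := by
      rw [← Nat.cast_sum, hnat]
    rw [← Finset.sum_congr rfl (fun W _ => (hterm W))] at *
    rw [hsum]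
    have hle2 : (q + 1) ≤ (q + 1) * (q + 1) := Nat.le_mul_of_pos_left _ (by omega)
    push_cast [hle2]
    ring
  -- uCount as filter card
  have hu : ∀ i : ℕ, uCount S i = (Finset.univ.filter (fun W : L => n W = i)).card := by
    intro i
    rw [uCount, Nat.card_congr (Equiv.subtypeSubtypeEquivSubtypeInter
      (fun W : Submodule F (Fin 3 → F) => finrank F W = 2)
      (fun W => lineCount S W = i)).symm, Nat.card_eq_fintype_card, Fintype.card_subtype]
  constructor
  · intro hdeg
    have key : ∑ W : L, (2*(n W:ℤ)^2 - 8*(n W:ℤ) + 6)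
        ≤ ∑ W : L, (if n W = 0 then (6:ℤ) else 0) := by
      apply Finset.sum_le_sum
      intro W _
      have h3 : n W ≤ 3 := hdeg W.1 W.2
      revert h3
      generalize n W = m
      intro h3
      interval_cases m <;> norm_num
    have hlhs : ∑ W : L, (2*(n W:ℤ)^2 - 8*(n W:ℤ) + 6)
        = 2*((q:ℤ)^2 + q) - 6*((q:ℤ)+1)^2 + 6*((q:ℤ)^2 + q + 1) := by
      have : ∀ W : L, 2*(n W:ℤ)^2 - 8*(n W:ℤ) + 6
          = 2*((n W:ℤ)^2 - (n W:ℤ)) - 6*(n W:ℤ) + 6 := fun W => by ring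
      rw [Finset.sum_congr rfl (fun W _ => this W), Finset.sum_add_distrib,
        Finset.sum_sub_distrib, ← Finset.mul_sum, ← Finset.mul_sum, hB, hC,
        Finset.sum_const, Finset.card_univ, nsmul_eq_mul]
      rw [hA]; ring
    have hrhs : ∑ W : L, (if n W = 0 then (6:ℤ) else 0) = 6 * (uCount S 0 : ℤ) := by
      rw [← Finset.sum_filter, Finset.sum_const, nsmul_eq_mul, hu 0]
      push_cast
      ring
    rw [hlhs, hrhs] at key
    linarith
  · intro c hdeg hc
    have key : ∑ W : L, ((n W:ℤ)^2 - 5*(n W:ℤ) + 4)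
        ≤ ∑ W : L, ((if n W = 0 then (4:ℤ) else 0) + (if n W = 3 then (-2:ℤ) else 0)) := by
      apply Finset.sum_le_sum
      intro W _
      have h4 : n W ≤ 4 := hdeg W.1 W.2
      revert h4
      generalize n W = m
      intro h4
      interval_cases m <;> norm_num
    have hlhs : ∑ W : L, ((n W:ℤ)^2 - 5*(n W:ℤ) + 4)
        = ((q:ℤ)^2 + q) - 4*((q:ℤ)+1)^2 + 4*((q:ℤ)^2 + q + 1) := by
      have : ∀ W : L, (n W:ℤ)^2 - 5*(n W:ℤ) + 4
          = ((n W:ℤ)^2 - (n W:ℤ)) - 4*(n W:ℤ) + 4 := fun W => by ring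
      rw [Finset.sum_congr rfl (fun W _ => this W), Finset.sum_add_distrib,
        Finset.sum_sub_distrib, ← Finset.mul_sum, hB, hC,
        Finset.sum_const, Finset.card_univ, nsmul_eq_mul]
      rw [hA]; ring
    have hrhs : ∑ W : L, ((if n W = 0 then (4:ℤ) else 0) + (if n W = 3 then (-2:ℤ) else 0))
        = 4 * (uCount S 0 : ℤ) - 2 * (c : ℤ) := by
      rw [Finset.sum_add_distrib, ← Finset.sum_filter, ← Finset.sum_filter,
        Finset.sum_const, Finset.sum_const, nsmul_eq_mul, nsmul_eq_mul, hu 0, ← hc, hu 3]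
      push_cast
      ring
    rw [hlhs, hrhs] at key
    linarith
end
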